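/- Let k ≥ 2 and τ(λ) := H_{k−1}(λ)⊗I_n, where H_{k−1}(λ) is the (k−1)×k pencil with −1 on the main diagonal and λ on the superdiagonal. Then the smallest singular values of the convolution matrices C_{k−2}(τ) and C_{k−1}(τ) satisfy σ_min(C_{k−2}(τ)) = σ_min(C_{k−1}(τ)) = 2 sin(π/(4k−2)) ≥ 3/(2k). -/

import Mathlib

noncomputable section

open Polynomial Matrix

namespace GLin

variable {F : Type*} [RCLike F]

/-! ### Matrix polynomials and pencils -/

/-- The matrix polynomial `P(λ) = ∑_{i=0}^k λ^i A_i` determined by its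
coefficient matrices `A_0, …, A_k` (grade `k`). -/
def matPoly {k m n : ℕ} (A : Fin (k + 1) → Matrix (Fin m) (Fin n) F) :
    Matrix (Fin m) (Fin n) F[X] :=
  Matrix.of fun r c => ∑ i : Fin (k + 1), Polynomial.C (A i r c) * Polynomial.X ^ (i : ℕ)

/-- The matrix pencil `L(λ) = λ X + Y`. -/
def pencil {ρ γ : Type*} (Xc Yc : Matrix ρ γ F) : Matrix ρ γ F[X] :=
  Matrix.of fun i j => Polynomial.C (Xc i j) * Polynomial.X + Polynomial.C (Yc i j)

/-- `Λ_k(λ) ⊗ I_n` where `Λ_k(λ) = (λ^{k-1}, …, λ, 1)ᵀ`. -/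
def Lam (F : Type*) [RCLike F] (k n : ℕ) : Matrix (Fin k × Fin n) (Fin n) F[X] :=
  Matrix.of fun p c => if p.2 = c then Polynomial.X ^ (k - 1 - (p.1 : ℕ)) else 0

/-- `Λ_k(λ)ᵀ ⊗ I_m`. -/
def LamRow (F : Type*) [RCLike F] (k m : ℕ) : Matrix (Fin m) (Fin k × Fin m) F[X] :=
  Matrix.of fun r p => if r = p.2 then Polynomial.X ^ (k - 1 - (p.1 : ℕ)) else 0

/-- `v ⊗ P(λ)`. -/
def vkron {k m n : ℕ} (v : Fin k → F) (P : Matrix (Fin m) (Fin n) F[X]) :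
    Matrix (Fin k × Fin m) (Fin n) F[X] :=
  Matrix.of fun p c => Polynomial.C (v p.1) * P p.2 c

/-- `wᵀ ⊗ P(λ)`. -/
def wkron {k m n : ℕ} (w : Fin k → F) (P : Matrix (Fin m) (Fin n) F[X]) :
    Matrix (Fin m) (Fin k × Fin n) F[X] :=
  Matrix.of fun r q => Polynomial.C (w q.1) * P r q.2

/-- The defining identity of `𝕃₁(P)`: `L(λ)(Λ_k(λ) ⊗ I_n) = v ⊗ P(λ)`. -/
def RightAnsatz {k m n : ℕ} (P : Matrix (Fin m) (Fin n) F[X])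
    (L : Matrix (Fin k × Fin m) (Fin k × Fin n) F[X]) (v : Fin k → F) : Prop :=
  L * Lam F k n = vkron v P

/-- The defining identity of `𝕃₂(P)`: `(Λ_k(λ)ᵀ ⊗ I_m) L(λ) = wᵀ ⊗ P(λ)`. -/
def LeftAnsatz {k m n : ℕ} (P : Matrix (Fin m) (Fin n) F[X])
    (L : Matrix (Fin k × Fin m) (Fin k × Fin n) F[X]) (w : Fin k → F) : Prop :=
  LamRow F k m * L = wkron w P

/-- The vector `α e₁ ∈ F^k`. -/
def e1 {k : ℕ} (α : F) : Fin k → F := fun i => if (i : ℕ) = 0 then α else 0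

/-- `M ⊗ I_m`. -/
def kronId {k m : ℕ} (M : Matrix (Fin k) (Fin k) F) :
    Matrix (Fin k × Fin m) (Fin k × Fin m) F :=
  Matrix.of fun p q => if p.2 = q.2 then M p.1 q.1 else 0

/-! ### (strong) g-linearizations -/

/-- `diag(P(λ), I_{k-1} ⊗ I_{m,n})`. -/
def glinTarget {k m n : ℕ} (P : Matrix (Fin m) (Fin n) F[X]) :
    Matrix (Fin k × Fin m) (Fin k × Fin n) F[X] :=
  Matrix.of fun p q =>
    if p.1 = q.1 then
      (if (p.1 : ℕ) = 0 then P p.2 q.2 else if (p.2 : ℕ) = (q.2 : ℕ) then 1 else 0)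
    else 0

/-- A `km × kn` pencil (or matrix polynomial) `L` is a g-linearization of the `m × n`
matrix polynomial `P` of grade `k` if `E(λ) L(λ) G(λ) = diag(P(λ), I_{k-1} ⊗ I_{m,n})`
for unimodular `E`, `G`. -/
def IsGLin {k m n : ℕ} (P : Matrix (Fin m) (Fin n) F[X])
    (L : Matrix (Fin k × Fin m) (Fin k × Fin n) F[X]) : Prop :=
  ∃ (E : Matrix (Fin k × Fin m) (Fin k × Fin m) F[X])
    (G : Matrix (Fin k × Fin n) (Fin k × Fin n) F[X]),
      IsUnit E.det ∧ IsUnit G.det ∧ E * L * G = glinTarget P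

/-- grade-`N` reversal `rev_N P(λ) = λ^N P(1/λ)`, entrywise. -/
def revMat {ρ γ : Type*} (N : ℕ) (P : Matrix ρ γ F[X]) : Matrix ρ γ F[X] :=
  P.map fun p => Polynomial.reflect N p

/-- Strong g-linearization of the grade-`k` matrix polynomial with coefficients `A`. -/
def IsStrongGLin {k m n : ℕ} (A : Fin (k + 1) → Matrix (Fin m) (Fin n) F)
    (L : Matrix (Fin k × Fin m) (Fin k × Fin n) F[X]) : Prop :=
  IsGLin (matPoly A) L ∧ IsGLin (revMat k (matPoly A)) (revMat 1 L)

/-! ### linearizations (rectangular, of size `(m+s) × (n+s)`) -/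

/-- A matrix polynomial `L` (indexed by arbitrary finite types of cardinalities
`m + s` and `n + s`) is a linearization of `P` if, after identifying the index types
with `Fin m ⊕ Fin s` and `Fin n ⊕ Fin s`, one has `E(λ) L(λ) G(λ) = diag(P(λ), I_s)`
for unimodular `E`, `G`. -/
def IsLin {m n : ℕ} (s : ℕ) (P : Matrix (Fin m) (Fin n) F[X])
    {ρ γ : Type*} [Fintype ρ] [DecidableEq ρ] [Fintype γ] [DecidableEq γ]
    (L : Matrix ρ γ F[X]) : Prop :=
  ∃ (er : ρ ≃ (Fin m ⊕ Fin s)) (ec : γ ≃ (Fin n ⊕ Fin s))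
    (E : Matrix (Fin m ⊕ Fin s) (Fin m ⊕ Fin s) F[X])
    (G : Matrix (Fin n ⊕ Fin s) (Fin n ⊕ Fin s) F[X]),
      IsUnit E.det ∧ IsUnit G.det ∧
        E * Matrix.reindex er ec L * G = Matrix.fromBlocks P 0 0 1

/-- Strong linearization of the grade-`k` matrix polynomial with coefficients `A`. -/
def IsStrongLin {k m n : ℕ} (s : ℕ) (A : Fin (k + 1) → Matrix (Fin m) (Fin n) F)
    {ρ γ : Type*} [Fintype ρ] [DecidableEq ρ] [Fintype γ] [DecidableEq γ]
    (L : Matrix ρ γ F[X]) : Prop :=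
  IsLin s (matPoly A) L ∧ IsLin s (revMat k (matPoly A)) (revMat 1 L)

/-! ### shifted sums -/

/-- Column shifted sum `X ⊞→ Y`. -/
def colShiftSum {k m n : ℕ} (Xc Yc : Matrix (Fin k × Fin m) (Fin k × Fin n) F) :
    Matrix (Fin k × Fin m) (Fin (k + 1) × Fin n) F :=
  Matrix.of fun p q =>
    (if h : (q.1 : ℕ) < k then Xc p (⟨(q.1 : ℕ), h⟩, q.2) else 0) +
    (if h : 0 < (q.1 : ℕ) then
        Yc p (⟨(q.1 : ℕ) - 1, by have := q.1.isLt; omega⟩, q.2)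
      else 0)

/-- Row shifted sum `X ⊞↓ Y`. -/
def rowShiftSum {k m n : ℕ} (Xc Yc : Matrix (Fin k × Fin m) (Fin k × Fin n) F) :
    Matrix (Fin (k + 1) × Fin m) (Fin k × Fin n) F :=
  Matrix.of fun p q =>
    (if h : (p.1 : ℕ) < k then Xc (⟨(p.1 : ℕ), h⟩, p.2) q else 0) +
    (if h : 0 < (p.1 : ℕ) then
        Yc (⟨(p.1 : ℕ) - 1, by have := p.1.isLt; omega⟩, p.2) q
      else 0)

/-! ### the parametrization of `𝕃₁(P)` and `𝕃₂(P)` -/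

/-- `X = [v ⊗ A_k ∣ -W]`. -/
def L1X {k m n : ℕ} (A : Fin (k + 1) → Matrix (Fin m) (Fin n) F) (v : Fin k → F)
    (W : Matrix (Fin k × Fin m) (Fin (k - 1) × Fin n) F) :
    Matrix (Fin k × Fin m) (Fin k × Fin n) F :=
  Matrix.of fun p q =>
    if h : (q.1 : ℕ) = 0 then v p.1 * A (Fin.last k) p.2 q.2
    else -W p (⟨(q.1 : ℕ) - 1, by have := q.1.isLt; omega⟩, q.2)

/-- `Y = [W + v ⊗ [A_{k-1} ⋯ A_1] ∣ v ⊗ A_0]`. -/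
def L1Y {k m n : ℕ} (A : Fin (k + 1) → Matrix (Fin m) (Fin n) F) (v : Fin k → F)
    (W : Matrix (Fin k × Fin m) (Fin (k - 1) × Fin n) F) :
    Matrix (Fin k × Fin m) (Fin k × Fin n) F :=
  Matrix.of fun p q =>
    if h : (q.1 : ℕ) < k - 1 then
      W p (⟨(q.1 : ℕ), h⟩, q.2) + v p.1 * A (⟨k - 1 - (q.1 : ℕ), by omega⟩) p.2 q.2
    else v p.1 * A 0 p.2 q.2

/-- `X = [wᵀ ⊗ A_k ; -Ŵ]`. -/
def L2X {k m n : ℕ} (A : Fin (k + 1) → Matrix (Fin m) (Fin n) F) (w : Fin k → F)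
    (W : Matrix (Fin (k - 1) × Fin m) (Fin k × Fin n) F) :
    Matrix (Fin k × Fin m) (Fin k × Fin n) F :=
  Matrix.of fun p q =>
    if h : (p.1 : ℕ) = 0 then w q.1 * A (Fin.last k) p.2 q.2
    else -W (⟨(p.1 : ℕ) - 1, by have := p.1.isLt; omega⟩, p.2) q

/-- `Y = [Ŵ + wᵀ ⊗ [A_{k-1}ᵀ ⋯ A_1ᵀ]ᵀ ; wᵀ ⊗ A_0]`. -/
def L2Y {k m n : ℕ} (A : Fin (k + 1) → Matrix (Fin m) (Fin n) F) (w : Fin k → F)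
    (W : Matrix (Fin (k - 1) × Fin m) (Fin k × Fin n) F) :
    Matrix (Fin k × Fin m) (Fin k × Fin n) F :=
  Matrix.of fun p q =>
    if h : (p.1 : ℕ) < k - 1 then
      W (⟨(p.1 : ℕ), h⟩, p.2) q + w q.1 * A (⟨k - 1 - (p.1 : ℕ), by omega⟩) p.2 q.2
    else w q.1 * A 0 p.2 q.2

/-! ### block structure and `Z`-matrices -/

/-- Assemble a `km × kn` matrix from blocks with row split `m + (k-1)m` and
column split `n + (k-1)n`. -/
def blk {k m n : ℕ} (TL : Matrix (Fin m) (Fin n) F)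
    (TR : Matrix (Fin m) (Fin (k - 1) × Fin n) F)
    (BL : Matrix (Fin (k - 1) × Fin m) (Fin n) F)
    (BR : Matrix (Fin (k - 1) × Fin m) (Fin (k - 1) × Fin n) F) :
    Matrix (Fin k × Fin m) (Fin k × Fin n) F :=
  Matrix.of fun p q =>
    if hp : (p.1 : ℕ) = 0 then
      if hq : (q.1 : ℕ) = 0 then TL p.2 q.2
      else TR p.2 (⟨(q.1 : ℕ) - 1, by have := q.1.isLt; omega⟩, q.2)
    else
      if hq : (q.1 : ℕ) = 0 then
        BL (⟨(p.1 : ℕ) - 1, by have := p.1.isLt; omega⟩, p.2) q.2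
      else
        BR (⟨(p.1 : ℕ) - 1, by have := p.1.isLt; omega⟩, p.2)
          (⟨(q.1 : ℕ) - 1, by have := q.1.isLt; omega⟩, q.2)

/-- Assemble `[[Y₁₁, T],[Z, 0]]`, row split `m + (k-1)m`, column split `(k-1)n + n`. -/
def blkY1 {k m n : ℕ} (Y11 : Matrix (Fin m) (Fin (k - 1) × Fin n) F)
    (T : Matrix (Fin m) (Fin n) F)
    (Z : Matrix (Fin (k - 1) × Fin m) (Fin (k - 1) × Fin n) F) :
    Matrix (Fin k × Fin m) (Fin k × Fin n) F :=
  Matrix.of fun p q =>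
    if hp : (p.1 : ℕ) = 0 then
      if hq : (q.1 : ℕ) < k - 1 then Y11 p.2 (⟨(q.1 : ℕ), hq⟩, q.2) else T p.2 q.2
    else
      if hq : (q.1 : ℕ) < k - 1 then
        Z (⟨(p.1 : ℕ) - 1, by have := p.1.isLt; omega⟩, p.2) (⟨(q.1 : ℕ), hq⟩, q.2)
      else 0

/-- Assemble `[[Y₁₁, Z],[T, 0]]`, row split `(k-1)m + m`, column split `n + (k-1)n`. -/
def blkY2 {k m n : ℕ} (Y11 : Matrix (Fin (k - 1) × Fin m) (Fin n) F)
    (Z : Matrix (Fin (k - 1) × Fin m) (Fin (k - 1) × Fin n) F)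
    (T : Matrix (Fin m) (Fin n) F) :
    Matrix (Fin k × Fin m) (Fin k × Fin n) F :=
  Matrix.of fun p q =>
    if hp : (p.1 : ℕ) < k - 1 then
      if hq : (q.1 : ℕ) = 0 then Y11 (⟨(p.1 : ℕ), hp⟩, p.2) q.2
      else Z (⟨(p.1 : ℕ), hp⟩, p.2) (⟨(q.1 : ℕ) - 1, by have := q.1.isLt; omega⟩, q.2)
    else
      if hq : (q.1 : ℕ) = 0 then T p.2 q.2 else 0

/-- The `Z`-matrix of `L = λX + Y ∈ 𝕃₁(P)` with respect to `M`:
the lower-left `(k-1)m × (k-1)n` block of `(M ⊗ I_m) Y`. -/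
def Zmat1 {k m n : ℕ} (M : Matrix (Fin k) (Fin k) F)
    (Yc : Matrix (Fin k × Fin m) (Fin k × Fin n) F) :
    Matrix (Fin (k - 1) × Fin m) (Fin (k - 1) × Fin n) F :=
  Matrix.of fun p q =>
    (kronId M * Yc : Matrix (Fin k × Fin m) (Fin k × Fin n) F)
      (⟨(p.1 : ℕ) + 1, by have := p.1.isLt; omega⟩, p.2)
      (⟨(q.1 : ℕ), by have := q.1.isLt; omega⟩, q.2)

/-- The `Z`-matrix of `L = λX + Y ∈ 𝕃₂(P)` with respect to `M̂`:
the upper-right `(k-1)m × (k-1)n` block of `Y (M̂ᵀ ⊗ I_n)`. -/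
def Zmat2 {k m n : ℕ} (M : Matrix (Fin k) (Fin k) F)
    (Yc : Matrix (Fin k × Fin m) (Fin k × Fin n) F) :
    Matrix (Fin (k - 1) × Fin m) (Fin (k - 1) × Fin n) F :=
  Matrix.of fun p q =>
    (Yc * kronId Mᵀ : Matrix (Fin k × Fin m) (Fin k × Fin n) F)
      (⟨(p.1 : ℕ), by have := p.1.isLt; omega⟩, p.2)
      (⟨(q.1 : ℕ) + 1, by have := q.1.isLt; omega⟩, q.2)

/-- `L = λX + Y ∈ 𝕃₁(P)` with right ansatz vector `v` has full `Z`-rank. -/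
def FullZrank1 {k m n : ℕ} (Yc : Matrix (Fin k × Fin m) (Fin k × Fin n) F)
    (v : Fin k → F) : Prop :=
  ∃ (M : Matrix (Fin k) (Fin k) F) (α : F),
    IsUnit M ∧ α ≠ 0 ∧ M.mulVec v = e1 α ∧ (Zmat1 M Yc).rank = (k - 1) * n

/-- `L = λX + Y ∈ 𝕃₂(P)` with left ansatz vector `w` has full `Z`-rank. -/
def FullZrank2 {k m n : ℕ} (Yc : Matrix (Fin k × Fin m) (Fin k × Fin n) F)
    (w : Fin k → F) : Prop :=
  ∃ (M : Matrix (Fin k) (Fin k) F) (α : F),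
    IsUnit M ∧ α ≠ 0 ∧ M.mulVec w = e1 α ∧ (Zmat2 M Yc).rank = (k - 1) * m

/-! ### null spaces, minimal bases and minimal indices over `F(λ)` -/

/-- A matrix polynomial viewed as a matrix over the field of rational functions. -/
def matRF {ρ γ : Type*} (P : Matrix ρ γ F[X]) : Matrix ρ γ (RatFunc F) :=
  P.map (algebraMap F[X] (RatFunc F))

/-- The right null space `N_r(P) = {x(λ) : P(λ) x(λ) ≡ 0}` over `F(λ)`. -/
def Nr {ρ γ : Type*} [Fintype γ] (P : Matrix ρ γ F[X]) :
    Submodule (RatFunc F) (γ → RatFunc F) :=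
  LinearMap.ker (Matrix.mulVecLin (matRF P))

/-- The left null space `N_l(P) = {y(λ) : y(λ)ᵀ P(λ) ≡ 0}` over `F(λ)`. -/
def Nl {ρ γ : Type*} [Fintype ρ] (P : Matrix ρ γ F[X]) :
    Submodule (RatFunc F) (ρ → RatFunc F) :=
  Nr Pᵀ

/-- The normal rank of a matrix polynomial: its rank over `F(λ)`. -/
def nrank {ρ γ : Type*} [Fintype γ] (P : Matrix ρ γ F[X]) : ℕ :=
  (matRF P).rank

/-- The rational vector determined by a vector polynomial. -/
def polyVec {γ : Type*} (x : γ → F[X]) : γ → RatFunc F :=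
  fun i => algebraMap F[X] (RatFunc F) (x i)

/-- A rational vector is a vector polynomial if all its entries are polynomials. -/
def IsVecPoly {γ : Type*} (x : γ → RatFunc F) : Prop :=
  ∃ p : γ → F[X], x = polyVec p

/-- The degree of a vector polynomial: the greatest degree of its components. -/
def polyVecDeg {γ : Type*} [Fintype γ] (x : γ → F[X]) : ℕ :=
  Finset.univ.sup fun i => (x i).natDegree

/-- A polynomial basis of the subspace `V` of `F(λ)^γ`. -/
def IsPolyBasis {γ ι : Type*} [Fintype γ]
    (V : Submodule (RatFunc F) (γ → RatFunc F)) (b : ι → γ → F[X]) : Prop :=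
  LinearIndependent (RatFunc F) (fun i => polyVec (b i)) ∧
    Submodule.span (RatFunc F) (Set.range fun i => polyVec (b i)) = V

/-- A minimal basis of `V`: a polynomial basis of least order (sum of degrees). -/
def IsMinimalBasis {γ ι : Type*} [Fintype γ] [Fintype ι]
    (V : Submodule (RatFunc F) (γ → RatFunc F)) (b : ι → γ → F[X]) : Prop :=
  IsPolyBasis V b ∧
    ∀ (d : ℕ) (b' : Fin d → γ → F[X]), IsPolyBasis V b' →
      ∑ i, polyVecDeg (b i) ≤ ∑ i, polyVecDeg (b' i)

/-- `ε` is the list of minimal indices of `V`: some minimal basis of `V` has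
`ε` as its list of degrees. -/
def HasMinIndices {γ : Type*} [Fintype γ]
    (V : Submodule (RatFunc F) (γ → RatFunc F)) {d : ℕ} (ε : Fin d → ℕ) : Prop :=
  ∃ b : Fin d → γ → F[X], IsMinimalBasis V b ∧ ∀ i, polyVecDeg (b i) = ε i

/-- `Λ_k(λ) ⊗ x(λ)`. -/
def lamTensor {n : ℕ} (k : ℕ) (x : Fin n → RatFunc F) : Fin k × Fin n → RatFunc F :=
  fun p => algebraMap F[X] (RatFunc F) (Polynomial.X ^ (k - 1 - (p.1 : ℕ))) * x p.2

/-- The matrix `vᵀ ⊗ I_m` over `F(λ)`; `𝓛_v(y) = (vproj v).mulVec y`. -/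
def vproj {k m : ℕ} (v : Fin k → F) : Matrix (Fin m) (Fin k × Fin m) (RatFunc F) :=
  Matrix.of fun r p =>
    if r = p.2 then algebraMap F[X] (RatFunc F) (Polynomial.C (v p.1)) else 0

/-- `(vᵀ ⊗ I_m) y` at the level of vector polynomials. -/
def LvPoly {k m : ℕ} (v : Fin k → F) (y : Fin k × Fin m → F[X]) : Fin m → F[X] :=
  fun r => ∑ i : Fin k, Polynomial.C (v i) * y (i, r)

/-- The rational subspace spanned by the rows of a matrix polynomial. -/
def rowSpan {ρ γ : Type*} [Fintype γ] (B : Matrix ρ γ F[X]) :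
    Submodule (RatFunc F) (γ → RatFunc F) :=
  Submodule.span (RatFunc F) (Set.range fun i => polyVec (B i))

/-- A matrix polynomial is a minimal basis if its rows form a minimal basis of the
rational subspace they span. -/
def IsMinimalBasisMat {ρ γ : Type*} [Fintype ρ] [Fintype γ] (B : Matrix ρ γ F[X]) : Prop :=
  IsMinimalBasis (rowSpan B) (fun i => B i)

/-- Dual minimal bases: `B ∈ F[λ]^{n₁×n}`, `C ∈ F[λ]^{n₂×n}` minimal bases with
`n₁ + n₂ = n` and `B Cᵀ = 0`. -/
def DualMinBases {ρ ρ' γ : Type*} [Fintype ρ] [Fintype ρ'] [Fintype γ]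
    (B : Matrix ρ γ F[X]) (Cm : Matrix ρ' γ F[X]) : Prop :=
  IsMinimalBasisMat B ∧ IsMinimalBasisMat Cm ∧
    Fintype.card ρ + Fintype.card ρ' = Fintype.card γ ∧ B * Cmᵀ = 0

/-! ### norms, singular values -/

/-- Square of the Frobenius norm of a constant matrix. -/
def frobSq {ρ γ : Type*} [Fintype ρ] [Fintype γ] (Ac : Matrix ρ γ F) : ℝ :=
  ∑ i, ∑ j, ‖Ac i j‖ ^ 2

/-- `‖λX + Y‖_F = sqrt(‖X‖_F² + ‖Y‖_F²)`. -/
def penFrob {ρ γ : Type*} [Fintype ρ] [Fintype γ] (Xc Yc : Matrix ρ γ F) : ℝ :=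
  Real.sqrt (frobSq Xc + frobSq Yc)

/-- `‖P‖_F = sqrt(∑ ‖A_i‖_F²)` for `P(λ) = ∑ λ^i A_i`. -/
def famFrob {k m n : ℕ} (A : Fin (k + 1) → Matrix (Fin m) (Fin n) F) : ℝ :=
  Real.sqrt (∑ i, frobSq (A i))

/-- `‖P‖_F` for a matrix polynomial of grade `g`. -/
def mpolyFrob {ρ γ : Type*} [Fintype ρ] [Fintype γ] (g : ℕ) (P : Matrix ρ γ F[X]) : ℝ :=
  Real.sqrt (∑ i, ∑ j, ∑ d ∈ Finset.range (g + 1), ‖(P i j).coeff d‖ ^ 2)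

/-- Square of the Euclidean norm of a vector. -/
def vecNormSq {ι : Type*} [Fintype ι] (x : ι → F) : ℝ := ∑ i, ‖x i‖ ^ 2

/-- The smallest singular value of a matrix. -/
def sigmaMin {ρ γ : Type*} [Fintype ρ] [Fintype γ] (Ac : Matrix ρ γ F) : ℝ :=
  if Fintype.card γ ≤ Fintype.card ρ then
    sInf {r : ℝ | ∃ x : γ → F, vecNormSq x = 1 ∧ r = Real.sqrt (vecNormSq (Ac.mulVec x))}
  else
    sInf {r : ℝ | ∃ y : ρ → F, vecNormSq y = 1 ∧ r = Real.sqrt (vecNormSq (Acᴴ.mulVec y))}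

/-- The spectral norm (2-norm) of a matrix. -/
def norm2 {ρ γ : Type*} [Fintype ρ] [Fintype γ] (Ac : Matrix ρ γ F) : ℝ :=
  sSup {r : ℝ | ∃ x : γ → F, vecNormSq x = 1 ∧ r = Real.sqrt (vecNormSq (Ac.mulVec x))}

/-- `κ₂(D) = ‖D‖₂ ‖D⁻¹‖₂`. -/
def cond2 {ρ : Type*} [Fintype ρ] [DecidableEq ρ] (Dc : Matrix ρ ρ F) : ℝ :=
  norm2 Dc * norm2 Dc⁻¹

/-! ### pencils used in the backward error analysis -/

/-- `B(λ) = λ [0 ∣ -R̃] + [R̃ ∣ 0]`, i.e. `R̃ (H_{k-1}(λ) ⊗ I_n)` up to sign conventions. -/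
def Bpencil {k n : ℕ} (R : Matrix (Fin (k - 1) × Fin n) (Fin (k - 1) × Fin n) F) :
    Matrix (Fin (k - 1) × Fin n) (Fin k × Fin n) F[X] :=
  Matrix.of fun p q =>
    (if h : (q.1 : ℕ) < k - 1 then Polynomial.C (R p (⟨(q.1 : ℕ), h⟩, q.2)) else 0) +
    (if h : 0 < (q.1 : ℕ) then
        Polynomial.X *
          Polynomial.C (-R p (⟨(q.1 : ℕ) - 1, by have := q.1.isLt; omega⟩, q.2))
      else 0)

/-- The coefficient of `λ` in `H_{k-1}(λ) ⊗ I_n`. -/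
def Hlam (F : Type*) [RCLike F] (k n : ℕ) :
    Matrix (Fin (k - 1) × Fin n) (Fin k × Fin n) F :=
  Matrix.of fun p q => if p.2 = q.2 ∧ (q.1 : ℕ) = (p.1 : ℕ) + 1 then 1 else 0

/-- The constant coefficient of `H_{k-1}(λ) ⊗ I_n`. -/
def Hconst (F : Type*) [RCLike F] (k n : ℕ) :
    Matrix (Fin (k - 1) × Fin n) (Fin k × Fin n) F :=
  Matrix.of fun p q => if p.2 = q.2 ∧ (q.1 : ℕ) = (p.1 : ℕ) then -1 else 0

/-- The convolution matrix `C_j(λ Xc + Yc)` of a pencil, with `j+1` block columns. -/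
def convPencil {ρ γ : Type*} (Xc Yc : Matrix ρ γ F) (j : ℕ) :
    Matrix (Fin (j + 2) × ρ) (Fin (j + 1) × γ) F :=
  Matrix.of fun r c =>
    if (r.1 : ℕ) = (c.1 : ℕ) then Xc r.2 c.2
    else if (r.1 : ℕ) = (c.1 : ℕ) + 1 then Yc r.2 c.2 else 0

/-- λ-coefficient of the trimmed pencil `L̂_t(λ)`:
`[[α A_k, X₁₂],[0, -R̃]]` with row split `m + (k-1)n`. -/
def LtX {k m n : ℕ} (α : F) (Ak : Matrix (Fin m) (Fin n) F)
    (X12 : Matrix (Fin m) (Fin (k - 1) × Fin n) F)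
    (R : Matrix (Fin (k - 1) × Fin n) (Fin (k - 1) × Fin n) F) :
    Matrix (Fin m ⊕ (Fin (k - 1) × Fin n)) (Fin k × Fin n) F :=
  Matrix.of fun s q =>
    Sum.elim
      (fun r => if h : (q.1 : ℕ) = 0 then α * Ak r q.2
        else X12 r (⟨(q.1 : ℕ) - 1, by have := q.1.isLt; omega⟩, q.2))
      (fun p => if h : (q.1 : ℕ) = 0 then 0
        else -R p (⟨(q.1 : ℕ) - 1, by have := q.1.isLt; omega⟩, q.2)) s

/-- Constant coefficient of the trimmed pencil `L̂_t(λ)`: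
`[[Y₁₁, α A₀],[R̃, 0]]` with row split `m + (k-1)n`. -/
def LtY {k m n : ℕ} (α : F) (A0 : Matrix (Fin m) (Fin n) F)
    (Y11 : Matrix (Fin m) (Fin (k - 1) × Fin n) F)
    (R : Matrix (Fin (k - 1) × Fin n) (Fin (k - 1) × Fin n) F) :
    Matrix (Fin m ⊕ (Fin (k - 1) × Fin n)) (Fin k × Fin n) F :=
  Matrix.of fun s q =>
    Sum.elim
      (fun r => if h : (q.1 : ℕ) < k - 1 then Y11 r (⟨(q.1 : ℕ), h⟩, q.2)
        else α * A0 r q.2)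
      (fun p => if h : (q.1 : ℕ) < k - 1 then R p (⟨(q.1 : ℕ), h⟩, q.2) else 0) s

/-! ### trimming -/

/-- The rows `[0 ∣ Q₂*] (M ⊗ I_m)`. -/
def bottomRows {k m n c : ℕ} (M : Matrix (Fin k) (Fin k) F)
    (Q : Matrix (Fin (k - 1) × Fin m) ((Fin (k - 1) × Fin n) ⊕ Fin c) F) :
    Matrix (Fin c) (Fin k × Fin m) F :=
  (Matrix.of fun (j : Fin c) (p : Fin k × Fin m) =>
      if h : (p.1 : ℕ) = 0 then 0
      else star (Q (⟨(p.1 : ℕ) - 1, by have := p.1.isLt; omega⟩, p.2) (Sum.inr j)))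
    * kronId M

/-- The square matrix `[D ; [0 ∣ Q₂*](M ⊗ I_m)]` whose invertibility makes `D` admissible. -/
def trimAux {k m n c : ℕ} (M : Matrix (Fin k) (Fin k) F)
    (Q : Matrix (Fin (k - 1) × Fin m) ((Fin (k - 1) × Fin n) ⊕ Fin c) F)
    (D : Matrix (Fin m ⊕ (Fin (k - 1) × Fin n)) (Fin k × Fin m) F) :
    Matrix ((Fin m ⊕ (Fin (k - 1) × Fin n)) ⊕ Fin c) (Fin k × Fin m) F :=
  Matrix.of (Sum.elim (fun i j => D i j) (fun i j => bottomRows M Q i j))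

/-- The columns `(M̂ᵀ ⊗ I_n) [0 ; Q₂]`. -/
def rightCols {k m n c : ℕ} (M : Matrix (Fin k) (Fin k) F)
    (Q : Matrix (Fin (k - 1) × Fin n) ((Fin (k - 1) × Fin m) ⊕ Fin c) F) :
    Matrix (Fin k × Fin n) (Fin c) F :=
  kronId Mᵀ *
    (Matrix.of fun (q : Fin k × Fin n) (j : Fin c) =>
      if h : (q.1 : ℕ) = 0 then 0
      else Q (⟨(q.1 : ℕ) - 1, by have := q.1.isLt; omega⟩, q.2) (Sum.inr j))

/-- The square matrix `[D̂ ∣ (M̂ᵀ ⊗ I_n)[0 ; Q₂]]` whose invertibility makes `D̂` admissible. -/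
def trimAux2 {k m n c : ℕ} (M : Matrix (Fin k) (Fin k) F)
    (Q : Matrix (Fin (k - 1) × Fin n) ((Fin (k - 1) × Fin m) ⊕ Fin c) F)
    (D : Matrix (Fin k × Fin n) (Fin n ⊕ (Fin (k - 1) × Fin m)) F) :
    Matrix (Fin k × Fin n) ((Fin n ⊕ (Fin (k - 1) × Fin m)) ⊕ Fin c) F :=
  Matrix.of fun q s => Sum.elim (fun t => D q t) (fun j => rightCols M Q q j) s



namespace Aux
open Finset

/-- the angle π/(4k-2) -/
def th (k : ℕ) : ℝ := Real.pi / (4 * (k:ℝ) - 2)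

variable {k : ℕ}

lemma den_pos (hk : 2 ≤ k) : (0:ℝ) < 4 * (k:ℝ) - 2 := by
  have : (2:ℝ) ≤ (k:ℝ) := by exact_mod_cast hk
  nlinarith

lemma th_pos (hk : 2 ≤ k) : 0 < th k := div_pos Real.pi_pos (den_pos hk)

lemma th_mul (hk : 2 ≤ k) : (4 * (k:ℝ) - 2) * th k = Real.pi := by
  rw [th, mul_div_cancel₀ _ (den_pos hk).ne']

/-- real-hypothesis versions -/
lemma sin_pos_r (hk : 2 ≤ k) {a : ℝ} (h1 : 0 < a) (h2 : a ≤ 2*(k:ℝ)) :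
    0 < Real.sin (a * th k) := by
  apply Real.sin_pos_of_pos_of_lt_pi
  · nlinarith [th_pos hk]
  · have h4 : (2:ℝ)*(k:ℝ) < 4*(k:ℝ)-2 := by
      have : (2:ℝ) ≤ (k:ℝ) := by exact_mod_cast hk
      nlinarith
    calc a * th k ≤ (2*(k:ℝ)) * th k := by nlinarith [th_pos hk]
    _ < (4*(k:ℝ)-2) * th k := by nlinarith [th_pos hk]
    _ = Real.pi := th_mul hk

lemma half_pi_eq (hk : 2 ≤ k) : (2*(k:ℝ)-1) * th k = Real.pi/2 := by
  have h := th_mul hk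
  have : (2:ℝ)*((2*(k:ℝ)-1) * th k) = Real.pi := by rw [← h]; ring
  linarith

lemma cos_nonneg_r (hk : 2 ≤ k) {a : ℝ} (h0 : 0 ≤ a) (h2 : a ≤ 2*(k:ℝ)-1) :
    0 ≤ Real.cos (a * th k) := by
  apply Real.cos_nonneg_of_mem_Icc
  constructor
  · nlinarith [th_pos hk, Real.pi_pos]
  · have : a * th k ≤ (2*(k:ℝ)-1) * th k := by nlinarith [th_pos hk]
    rw [half_pi_eq hk] at this; linarith

lemma cos_pos_r (hk : 2 ≤ k) {a : ℝ} (h0 : 0 ≤ a) (h2 : a < 2*(k:ℝ)-1) :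
    0 < Real.cos (a * th k) := by
  apply Real.cos_pos_of_mem_Ioo
  constructor
  · nlinarith [th_pos hk, Real.pi_pos]
  · have : a * th k < (2*(k:ℝ)-1) * th k := by nlinarith [th_pos hk]
    rw [half_pi_eq hk] at this; simpa using this

lemma k_cast_ge (hk : 2 ≤ k) : (2:ℝ) ≤ (k:ℝ) := by exact_mod_cast hk

/-- pivot sequence, real-indexed angles -/
def cc (k m : ℕ) : ℝ :=
  Real.sin ((2*(m:ℝ)+4) * th k) / Real.sin ((2*(m:ℝ)+2) * th k)

lemma m_le (hk : 2 ≤ k) {m : ℕ} (hm : m ≤ k - 2) : (m:ℝ) ≤ (k:ℝ) - 2 := by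
  have h : (m:ℝ) ≤ ((k-2 : ℕ):ℝ) := by exact_mod_cast hm
  rwa [Nat.cast_sub (by omega : 2 ≤ k)] at h

lemma cc_pos (hk : 2 ≤ k) {m : ℕ} (hm : m ≤ k - 2) : 0 < cc k m := by
  have hm' := m_le hk hm
  exact div_pos (sin_pos_r hk (by positivity) (by nlinarith))
    (sin_pos_r hk (by positivity) (by nlinarith))

lemma cc_ge_one (hk : 2 ≤ k) {m : ℕ} (hm : m ≤ k - 2) : 1 ≤ cc k m := by
  have hm' := m_le hk hm
  have hs2 : 0 < Real.sin ((2*(m:ℝ)+2) * th k) :=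
    sin_pos_r hk (by positivity) (by nlinarith)
  rw [cc, le_div_iff₀ hs2, one_mul]
  have e1 : (2*(m:ℝ)+4) * th k = (2*(m:ℝ)+3) * th k + th k := by ring
  have e2 : (2*(m:ℝ)+2) * th k = (2*(m:ℝ)+3) * th k - th k := by ring
  rw [e1, e2, Real.sin_add, Real.sin_sub]
  have h1 : 0 ≤ Real.cos ((2*(m:ℝ)+3) * th k) := cos_nonneg_r hk (by positivity) (by nlinarith)
  have h2 : 0 < Real.sin (th k) := by
    have := sin_pos_r hk (a := 1) one_pos (by nlinarith [k_cast_ge hk])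
    simpa using this
  nlinarith

lemma cc_rec (hk : 2 ≤ k) {m : ℕ} (hm : m + 1 ≤ k - 2) :
    cc k m * cc k (m+1) = 2 * Real.cos (2 * th k) * cc k m - 1 := by
  have hm' : ((m:ℝ)+1) ≤ (k:ℝ) - 2 := by
    have := m_le hk hm; push_cast at this ⊢; linarith
  have s2 : 0 < Real.sin ((2*(m:ℝ)+2) * th k) := sin_pos_r hk (by positivity) (by nlinarith)
  have s4 : 0 < Real.sin ((2*(m:ℝ)+4) * th k) := sin_pos_r hk (by positivity) (by nlinarith)
  have key : Real.sin ((2*(m:ℝ)+6) * th k) + Real.sin ((2*(m:ℝ)+2) * th k)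
      = 2 * Real.cos (2 * th k) * Real.sin ((2*(m:ℝ)+4) * th k) := by
    have e1 : (2*(m:ℝ)+6) * th k = (2*(m:ℝ)+4) * th k + 2 * th k := by ring
    have e2 : (2*(m:ℝ)+2) * th k = (2*(m:ℝ)+4) * th k - 2 * th k := by ring
    rw [e1, e2, Real.sin_add, Real.sin_sub]; ring
  have e3 : (2*((m:ℝ)+1)+4) = 2*(m:ℝ)+6 := by ring
  have e4 : (2*((m:ℝ)+1)+2) = 2*(m:ℝ)+4 := by ring
  rw [cc, cc]
  push_cast
  rw [e3, e4]
  rw [div_mul_div_comm, mul_div_assoc', div_sub_one (by positivity), div_eq_div_iff (by positivity) (by positivity)]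
  linear_combination (Real.sin ((2*(m:ℝ)+2) * th k) * Real.sin ((2*(m:ℝ)+4) * th k)) * key

variable {E : Type*} [SeminormedAddCommGroup E]

lemma chain_aux (hk : 2 ≤ k) (y : ℕ → E) :
    ∀ m, m ≤ k - 2 →
    (2 - 2*Real.cos (2 * th k)) * ∑ t ∈ range (m+1), ‖y t‖^2
      + (cc k m - 1) * ‖y m‖^2
    ≤ ‖y 0‖^2 + ∑ t ∈ range m, ‖y (t+1) - y t‖^2 := by
  intro m
  induction m with
  | zero =>
    intro _
    have hc : cc k 0 = 2 * Real.cos (2 * th k) := by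
      rw [cc]
      have e1 : (2*((0:ℕ):ℝ)+4) * th k = 2*((2*((0:ℕ):ℝ)+2) * th k) := by push_cast; ring
      have e2 : (2*((0:ℕ):ℝ)+2) * th k = 2 * th k := by push_cast; ring
      rw [e1, Real.sin_two_mul, e2]
      have s2 : 0 < Real.sin (2 * th k) :=  by
        have := sin_pos_r hk (a := 2) two_pos (by nlinarith [k_cast_ge hk])
        simpa using this
      field_simp
    have hs : ∑ t ∈ range (0+1), ‖y t‖^2 = ‖y 0‖^2 := by simp
    have hs2 : ∑ t ∈ range 0, ‖y (t+1) - y t‖^2 = 0 := by simp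
    rw [hc, hs, hs2]
    have : (2 - 2*(2*Real.cos (2*th k))/2) * ‖y 0‖^2 + (2*Real.cos (2*th k) - 1) * ‖y 0‖^2 = ‖y 0‖^2 + 0 := by ring
    nlinarith [this]
  | succ m ih =>
    intro hm1
    have hm : m ≤ k - 2 := by omega
    have IH := ih hm
    have e1 : ∑ t ∈ range (m+1+1), ‖y t‖^2 = ∑ t ∈ range (m+1), ‖y t‖^2 + ‖y (m+1)‖^2 :=
      Finset.sum_range_succ _ _
    have e2 : ∑ t ∈ range (m+1), ‖y (t+1) - y t‖^2
        = ∑ t ∈ range m, ‖y (t+1) - y t‖^2 + ‖y (m+1) - y m‖^2 :=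
      Finset.sum_range_succ _ _
    rw [e1, e2]
    have hrec := cc_rec hk hm1
    have hcpos : 0 < cc k m := cc_pos hk hm
    set a := ‖y m‖ with ha
    set b := ‖y (m+1)‖ with hb
    have hdiff : (b - a)^2 ≤ ‖y (m+1) - y m‖^2 := by
      have h1 : b - a ≤ ‖y (m+1) - y m‖ := norm_sub_norm_le _ _
      have h2 : a - b ≤ ‖y (m+1) - y m‖ := by
        have := norm_sub_norm_le (y m) (y (m+1))
        rwa [norm_sub_rev] at this
      have h3 : |b - a| ≤ ‖y (m+1) - y m‖ := abs_le.mpr ⟨by linarith, by linarith⟩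
      calc (b-a)^2 = |b-a|^2 := (sq_abs _).symm
      _ ≤ ‖y (m+1) - y m‖^2 := pow_le_pow_left₀ (abs_nonneg _) h3 2
    have step : (2 - 2*Real.cos (2 * th k)) * b^2 + (cc k (m+1) - 1) * b^2
        ≤ (cc k m - 1) * a^2 + ‖y (m+1) - y m‖^2 := by
      have key : (2 - 2*Real.cos (2*th k)) * b^2 + (cc k (m+1) - 1) * b^2
          ≤ (cc k m - 1) * a^2 + (b-a)^2 := by
        nlinarith [sq_nonneg (b - cc k m * a), hcpos, hrec, sq_nonneg a, sq_nonneg b]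
      linarith [hdiff]
    linarith [IH, step]

/-- Dirichlet-first chain inequality -/
lemma seq_first (hk : 2 ≤ k) (y : ℕ → E) {L : ℕ} (hL1 : 1 ≤ L) (hLk : L ≤ k - 1) :
    (2 - 2*Real.cos (2 * th k)) * ∑ t ∈ range L, ‖y t‖^2
    ≤ ‖y 0‖^2 + ∑ t ∈ range (L-1), ‖y (t+1) - y t‖^2 := by
  obtain ⟨m, rfl⟩ : ∃ m, L = m + 1 := ⟨L - 1, by omega⟩
  have hm : m ≤ k - 2 := by omega
  have h := chain_aux hk y m hm
  have h1 : 0 ≤ (cc k m - 1) * ‖y m‖^2 :=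
    mul_nonneg (by linarith [cc_ge_one hk hm]) (by positivity)
  have e : m + 1 - 1 = m := by omega
  rw [e]
  linarith

/-- Dirichlet-last chain inequality -/
lemma seq_last (hk : 2 ≤ k) (y : ℕ → E) {L : ℕ} (hL1 : 1 ≤ L) (hLk : L ≤ k - 1) :
    (2 - 2*Real.cos (2 * th k)) * ∑ t ∈ range L, ‖y t‖^2
    ≤ ∑ t ∈ range (L-1), ‖y (t+1) - y t‖^2 + ‖y (L-1)‖^2 := by
  have h := seq_first hk (fun t => y (L-1-t)) hL1 hLk
  simp only [Nat.sub_zero] at h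
  rw [Finset.sum_range_reflect (fun t => ‖y t‖^2) L] at h
  have e : ∑ t ∈ range (L-1), ‖y (L-1-(t+1)) - y (L-1-t)‖^2
      = ∑ t ∈ range (L-1), ‖y (t+1) - y t‖^2 := by
    rw [← Finset.sum_range_reflect (fun t => ‖y (t+1) - y t‖^2) (L-1)]
    apply Finset.sum_congr rfl
    intro t ht
    simp only [Finset.mem_range] at ht
    rw [norm_sub_rev]
    have e1 : L - 1 - (t+1) = L - 1 - 1 - t := by omega
    have e2 : L - 1 - t = L - 1 - 1 - t + 1 := by omega
    rw [e1, e2]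
  rw [e] at h
  linarith
def zv (k t : ℕ) : ℝ := Real.cos ((2*(t:ℝ)+1) * th k)

lemma eig_partial (k : ℕ) (m : ℕ) :
    ∑ t ∈ range m, (zv k t - zv k (t+1))^2
      - (2 - 2*Real.cos (2 * th k)) * ∑ t ∈ range m, (zv k t)^2
    = Real.sin (th k)^2 - Real.sin (th k) * Real.sin ((4*(m:ℝ)+1) * th k) := by
  induction m with
  | zero =>
    simp only [range_zero, sum_empty, Nat.cast_zero]
    have : (4*(0:ℝ)+1) * th k = th k := by ring
    rw [this]; ring
  | succ m ih =>
    rw [Finset.sum_range_succ, Finset.sum_range_succ]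
    have step : (zv k m - zv k (m+1))^2 - (2 - 2*Real.cos (2 * th k)) * (zv k m)^2
        = - Real.sin (th k) * (Real.sin ((4*(m:ℝ)+5) * th k) - Real.sin ((4*(m:ℝ)+1) * th k)) := by
      set θ := th k with hθ
      have hzv : zv k m = Real.cos ((2*(m:ℝ)+1) * θ) := rfl
      have hzv2 : zv k (m+1) = Real.cos ((2*(m:ℝ)+1) * θ + 2*θ) := by
        rw [zv, hθ]; push_cast; ring_nf
      rw [hzv, hzv2]
      have e2 : (4*(m:ℝ)+5) * θ = 2*((2*(m:ℝ)+1) * θ) + (2*θ + θ) := by ring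
      have e3 : (4*(m:ℝ)+1) * θ = 2*((2*(m:ℝ)+1) * θ) - θ := by ring
      set A := (2*(m:ℝ)+1) * θ
      rw [e2, e3]
      simp only [Real.sin_add, Real.cos_add, Real.sin_sub, Real.cos_sub,
        Real.sin_two_mul, Real.cos_two_mul]
      have p1 := Real.sin_sq_add_cos_sq A
      have p2 := Real.sin_sq_add_cos_sq θ
      linear_combination (4*Real.sin θ^2*Real.cos θ^2) * p1
        + (4*Real.cos θ^2*Real.cos A^2 - 4*Real.sin A*Real.cos A*Real.sin θ*Real.cos θ) * p2
    have cast1 : (4*(((m:ℕ)+1:ℕ)):ℝ)+1 = 4*(m:ℝ)+5 := by push_cast; ring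
    push_cast
    push_cast at ih
    rw [show (4*((m:ℝ)+1)+1) = 4*(m:ℝ)+5 by ring]
    linarith [ih, step]

lemma eig_identity (hk : 2 ≤ k) :
    ∑ t ∈ range (k-2), (zv k t - zv k (t+1))^2 + (zv k (k-2))^2
    = (2 - 2*Real.cos (2 * th k)) * ∑ t ∈ range (k-1), (zv k t)^2 := by
  have h := eig_partial k (k-2)
  have e1 : ∑ t ∈ range (k-1), (zv k t)^2
      = ∑ t ∈ range (k-2), (zv k t)^2 + (zv k (k-2))^2 := by
    have : k - 1 = (k-2) + 1 := by omega
    rw [this, Finset.sum_range_succ]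
  rw [e1]
  set θ := th k with hθ
  have hpi := th_mul hk
  have hb1 : zv k (k-2) = Real.sin (2*θ) := by
    rw [zv]
    have e : (2*(((k:ℕ)-2:ℕ)):ℝ)+1 = 2*(k:ℝ)-3 := by
      push_cast [Nat.cast_sub (by omega : 2 ≤ k)]; ring
    rw [e]
    have e2 : (2*(k:ℝ)-3) * θ = Real.pi/2 - 2*θ := by nlinarith [hpi]
    rw [e2, Real.cos_pi_div_two_sub]
  have hb2 : Real.sin ((4*((k-2:ℕ):ℝ)+1) * θ) = Real.sin (5*θ) := by
    have e : (4*((k-2:ℕ):ℝ)+1) * θ = Real.pi - 5*θ := by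
      push_cast [Nat.cast_sub (by omega : 2 ≤ k)]
      nlinarith [hpi]
    rw [e, Real.sin_pi_sub]
  rw [hb2] at h
  rw [hb1]
  -- now: need sin θ^2 - sin θ sin 5θ + sin(2θ)^2 = (2-2cos 2θ) sin(2θ)^2, combined with h
  have key : Real.sin θ^2 - Real.sin θ * Real.sin (5*θ) + Real.sin (2*θ)^2
      = (2 - 2*Real.cos (2*θ)) * Real.sin (2*θ)^2 := by
    have e5 : 5*θ = 2*θ + (2*θ + θ) := by ring
    rw [e5]
    simp only [Real.sin_add, Real.cos_add, Real.sin_two_mul, Real.cos_two_mul]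
    have p2 := Real.sin_sq_add_cos_sq θ
    nlinarith [p2]
  linarith [h, key]
def dlen (A B s : ℕ) : ℕ := min (min A B) (min (s+1) (A+B-1-s))

lemma sum_diag {M : Type*} [AddCommMonoid M] (A B : ℕ) (f : ℕ → ℕ → M) :
    ∑ r ∈ range A, ∑ p ∈ range B, f r p
    = ∑ s ∈ range (A+B-1), ∑ t ∈ range (dlen A B s), f (t + (s-(B-1))) (t + ((B-1)-s)) := by
  rw [← Finset.sum_product', Finset.sum_sigma']
  apply Finset.sum_nbij' (i := fun rp => (⟨rp.1 + (B-1) - rp.2, min rp.1 rp.2⟩ : Σ _ : ℕ, ℕ))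
    (j := fun st => (st.2 + (st.1-(B-1)), st.2 + ((B-1)-st.1)))
  · rintro ⟨r,p⟩ hm
    simp only [Finset.mem_product, Finset.mem_range] at hm
    simp only [Finset.mem_sigma, Finset.mem_range, dlen]
    omega
  · rintro ⟨s,t⟩ hm
    simp only [Finset.mem_sigma, Finset.mem_range, dlen] at hm
    simp only [Finset.mem_product, Finset.mem_range]
    omega
  · rintro ⟨r,p⟩ hm
    simp only [Finset.mem_product, Finset.mem_range] at hm
    dsimp only
    simp only [Prod.mk.injEq]
    constructor <;> omega
  · rintro ⟨s,t⟩ hm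
    simp only [Finset.mem_sigma, Finset.mem_range, dlen] at hm
    dsimp only
    have h1 : t + (s-(B-1)) + (B-1) - (t + (B-1-s)) = s := by omega
    have h2 : min (t + (s-(B-1))) (t + (B-1-s)) = t := by omega
    simp only [h1, h2]
  · rintro ⟨r,p⟩ hm
    simp only [Finset.mem_product, Finset.mem_range] at hm
    dsimp only
    congr 1 <;> omega
lemma sum_ite_coe {N : ℕ} {M : Type*} [AddCommMonoid M] (f : Fin N → M) (a : ℕ) :
    (∑ c : Fin N, if a = (c:ℕ) then f c else 0) = if h : a < N then f ⟨a,h⟩ else 0 := by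
  by_cases h : a < N
  · rw [dif_pos h, Finset.sum_eq_single ⟨a,h⟩]
    · simp
    · intro b _ hb
      rw [if_neg]
      intro hab
      exact hb (by ext; simp [← hab])
    · simp
  · rw [dif_neg h, Finset.sum_eq_zero]
    intro b _
    rw [if_neg]
    intro hab
    exact h (hab ▸ b.isLt)

lemma sum_snd_ite {n : ℕ} {M : Type*} [AddCommMonoid M] (p2 : Fin n) (f : Fin n → M) :
    (∑ q2 : Fin n, if p2 = q2 then f q2 else 0) = f p2 := by
  simp

/-- row sum of Hlam entries times a vector -/
lemma hlam_dot {k n : ℕ} (p1 : Fin (k-1)) (p2 : Fin n) (g : Fin k × Fin n → F) :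
    (∑ q : Fin k × Fin n, Hlam F k n (p1,p2) q * g q)
    = g (⟨(p1:ℕ)+1, by have := p1.isLt; omega⟩, p2) := by
  rw [Fintype.sum_prod_type]
  have step : ∀ q1 : Fin k, (∑ q2 : Fin n, Hlam F k n (p1,p2) (q1,q2) * g (q1,q2))
      = if ((p1:ℕ)+1) = (q1:ℕ) then g (q1, p2) else 0 := by
    intro q1
    by_cases hq : ((p1:ℕ)+1) = (q1:ℕ)
    · rw [if_pos hq]
      have : ∀ q2 : Fin n, Hlam F k n (p1,p2) (q1,q2) * g (q1,q2)
          = if p2 = q2 then g (q1,q2) else 0 := by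
        intro q2
        simp only [Hlam, Matrix.of_apply]
        by_cases h2 : p2 = q2
        · rw [if_pos ⟨h2, hq.symm⟩, if_pos h2, one_mul]
        · rw [if_neg (by tauto), if_neg h2, zero_mul]
      rw [Finset.sum_congr rfl (fun q2 _ => this q2)]
      exact sum_snd_ite p2 _
    · rw [if_neg hq, Finset.sum_eq_zero]
      intro q2 _
      simp only [Hlam, Matrix.of_apply]
      rw [if_neg (by tauto), zero_mul]
  rw [Finset.sum_congr rfl (fun q1 _ => step q1), sum_ite_coe (fun q1 => g (q1, p2)) ((p1:ℕ)+1),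
    dif_pos (by have := p1.isLt; omega : (p1:ℕ)+1 < k)]

/-- row sum of Hconst entries times a vector -/
lemma hconst_dot {k n : ℕ} (p1 : Fin (k-1)) (p2 : Fin n) (g : Fin k × Fin n → F) :
    (∑ q : Fin k × Fin n, Hconst F k n (p1,p2) q * g q)
    = - g (⟨(p1:ℕ), by have := p1.isLt; omega⟩, p2) := by
  rw [Fintype.sum_prod_type]
  have step : ∀ q1 : Fin k, (∑ q2 : Fin n, Hconst F k n (p1,p2) (q1,q2) * g (q1,q2))
      = if ((p1:ℕ)) = (q1:ℕ) then - g (q1, p2) else 0 := by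
    intro q1
    by_cases hq : ((p1:ℕ)) = (q1:ℕ)
    · rw [if_pos hq]
      have : ∀ q2 : Fin n, Hconst F k n (p1,p2) (q1,q2) * g (q1,q2)
          = if p2 = q2 then - g (q1,q2) else 0 := by
        intro q2
        simp only [Hconst, Matrix.of_apply]
        by_cases h2 : p2 = q2
        · rw [if_pos ⟨h2, hq.symm⟩, if_pos h2, neg_one_mul]
        · rw [if_neg (by tauto), if_neg h2, zero_mul]
      rw [Finset.sum_congr rfl (fun q2 _ => this q2)]
      exact sum_snd_ite p2 _
    · rw [if_neg hq, Finset.sum_eq_zero]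
      intro q2 _
      simp only [Hconst, Matrix.of_apply]
      rw [if_neg (by tauto), zero_mul]
  rw [Finset.sum_congr rfl (fun q1 _ => step q1), sum_ite_coe (fun q1 => - g (q1, p2)) ((p1:ℕ)),
    dif_pos (by have := p1.isLt; omega : (p1:ℕ) < k)]

/-- evaluation of the convolution pencil times a vector -/
lemma conv_mulVec {k n j : ℕ} (x : Fin (j+1) × (Fin k × Fin n) → F)
    (r1 : Fin (j+2)) (p1 : Fin (k-1)) (p2 : Fin n) :
    (convPencil (Hlam F k n) (Hconst F k n) j).mulVec x (r1, (p1, p2))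
    = (if h : (r1:ℕ) < j+1 then x (⟨(r1:ℕ), h⟩, (⟨(p1:ℕ)+1, by have := p1.isLt; omega⟩, p2)) else 0)
      - (if h : 1 ≤ (r1:ℕ) then
          x (⟨(r1:ℕ)-1, by have := r1.isLt; omega⟩, (⟨(p1:ℕ), by have := p1.isLt; omega⟩, p2))
        else 0) := by
  rw [Matrix.mulVec, dotProduct, Fintype.sum_prod_type]
  have step : ∀ c1 : Fin (j+1),
      (∑ q : Fin k × Fin n, convPencil (Hlam F k n) (Hconst F k n) j (r1,(p1,p2)) (c1,q) * x (c1,q))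
      = (if (r1:ℕ) = (c1:ℕ) then x (c1, (⟨(p1:ℕ)+1, by have := p1.isLt; omega⟩, p2)) else 0)
        + (if (r1:ℕ) = (c1:ℕ)+1 then - x (c1, (⟨(p1:ℕ), by have := p1.isLt; omega⟩, p2)) else 0) := by
    intro c1
    by_cases h1 : (r1:ℕ) = (c1:ℕ)
    · rw [if_pos h1, if_neg (by omega)]
      rw [add_zero, ← hlam_dot p1 p2 (fun q => x (c1, q))]
      apply Finset.sum_congr rfl
      intro q _
      congr 1
      simp only [convPencil, Matrix.of_apply, if_pos h1]
    · rw [if_neg h1]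
      by_cases h2 : (r1:ℕ) = (c1:ℕ)+1
      · rw [if_pos h2, zero_add, ← hconst_dot p1 p2 (fun q => x (c1, q))]
        apply Finset.sum_congr rfl
        intro q _
        congr 1
        simp only [convPencil, Matrix.of_apply, if_neg h1, if_pos h2]
      · rw [if_neg h2, add_zero, Finset.sum_eq_zero]
        intro q _
        simp only [convPencil, Matrix.of_apply, if_neg h1, if_neg h2, zero_mul]
  rw [Finset.sum_congr rfl (fun c1 _ => step c1), Finset.sum_add_distrib]
  rw [sum_ite_coe (fun c1 => x (c1, (⟨(p1:ℕ)+1, by have := p1.isLt; omega⟩, p2))) (r1:ℕ)]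
  have e2 : (∑ c1 : Fin (j+1), if (r1:ℕ) = (c1:ℕ)+1 then
      - x (c1, (⟨(p1:ℕ), by have := p1.isLt; omega⟩, p2)) else 0)
      = if h : 1 ≤ (r1:ℕ) then
          - x (⟨(r1:ℕ)-1, by have := r1.isLt; omega⟩, (⟨(p1:ℕ), by have := p1.isLt; omega⟩, p2))
        else 0 := by
    have : ∀ c1 : Fin (j+1), (if (r1:ℕ) = (c1:ℕ)+1 then
        - x (c1, (⟨(p1:ℕ), by have := p1.isLt; omega⟩, p2)) else 0)
        = (if (r1:ℕ)-1 = (c1:ℕ) then (if 1 ≤ (r1:ℕ) then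
            - x (c1, (⟨(p1:ℕ), by have := p1.isLt; omega⟩, p2)) else 0) else 0) := by
      intro c1
      by_cases hc : (r1:ℕ) = (c1:ℕ)+1
      · rw [if_pos hc, if_pos (by omega), if_pos (by omega)]
      · rw [if_neg hc]
        by_cases hd : (r1:ℕ)-1 = (c1:ℕ)
        · rw [if_pos hd, if_neg (by omega)]
        · rw [if_neg hd]
    rw [Finset.sum_congr rfl (fun c1 _ => this c1), sum_ite_coe]
    by_cases hr : 1 ≤ (r1:ℕ)
    · rw [dif_pos (by have := r1.isLt; omega : (r1:ℕ)-1 < j+1), if_pos hr, dif_pos hr]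
    · rw [dif_pos (by have := r1.isLt; omega : (r1:ℕ)-1 < j+1), if_neg hr, dif_neg hr]
  rw [e2]
  by_cases hr : 1 ≤ (r1:ℕ)
  · rw [dif_pos hr, dif_pos hr]; ring
  · rw [dif_neg hr, dif_neg hr]; ring

/-- column sum of Hlam entries (starred) times a vector -/
lemma hlam_dot' {k n : ℕ} (q1 : Fin k) (q2 : Fin n) (g : Fin (k-1) × Fin n → F) :
    (∑ p : Fin (k-1) × Fin n, star (Hlam F k n p (q1,q2)) * g p)
    = if h : 1 ≤ (q1:ℕ) then g (⟨(q1:ℕ)-1, by have := q1.isLt; omega⟩, q2) else 0 := by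
  rw [Fintype.sum_prod_type]
  have step : ∀ p1 : Fin (k-1), (∑ p2 : Fin n, star (Hlam F k n (p1,p2) (q1,q2)) * g (p1,p2))
      = if (q1:ℕ)-1 = (p1:ℕ) then (if 1 ≤ (q1:ℕ) then g (p1, q2) else 0) else 0 := by
    intro p1
    by_cases hq : ((q1:ℕ)) = (p1:ℕ)+1
    · rw [if_pos (by omega), if_pos (by omega)]
      have : ∀ p2 : Fin n, star (Hlam F k n (p1,p2) (q1,q2)) * g (p1,p2)
          = if q2 = p2 then g (p1,p2) else 0 := by
        intro p2
        simp only [Hlam, Matrix.of_apply]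
        by_cases h2 : p2 = q2
        · rw [if_pos ⟨h2, hq⟩, star_one, one_mul, if_pos h2.symm]
        · rw [if_neg (by tauto), star_zero, zero_mul, if_neg (fun h => h2 h.symm)]
      rw [Finset.sum_congr rfl (fun p2 _ => this p2)]
      simp
    · have hz : ∑ p2 : Fin n, star (Hlam F k n (p1,p2) (q1,q2)) * g (p1,p2) = 0 := by
        apply Finset.sum_eq_zero
        intro p2 _
        simp only [Hlam, Matrix.of_apply]
        rw [if_neg (by tauto), star_zero, zero_mul]
      rw [hz]
      by_cases hd : (q1:ℕ)-1 = (p1:ℕ)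
      · rw [if_pos hd, if_neg (by omega)]
      · rw [if_neg hd]
  rw [Finset.sum_congr rfl (fun p1 _ => step p1), sum_ite_coe]
  by_cases hr : 1 ≤ (q1:ℕ)
  · rw [dif_pos (by have := q1.isLt; omega : (q1:ℕ)-1 < k-1), if_pos hr, dif_pos hr]
  · rw [dif_neg hr]
    by_cases hlt : (q1:ℕ)-1 < k-1
    · rw [dif_pos hlt, if_neg hr]
    · rw [dif_neg hlt]

/-- column sum of Hconst entries (starred) times a vector -/
lemma hconst_dot' {k n : ℕ} (q1 : Fin k) (q2 : Fin n) (g : Fin (k-1) × Fin n → F) :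
    (∑ p : Fin (k-1) × Fin n, star (Hconst F k n p (q1,q2)) * g p)
    = if h : (q1:ℕ) < k-1 then - g (⟨(q1:ℕ), h⟩, q2) else 0 := by
  rw [Fintype.sum_prod_type]
  have step : ∀ p1 : Fin (k-1), (∑ p2 : Fin n, star (Hconst F k n (p1,p2) (q1,q2)) * g (p1,p2))
      = if (q1:ℕ) = (p1:ℕ) then - g (p1, q2) else 0 := by
    intro p1
    by_cases hq : ((q1:ℕ)) = (p1:ℕ)
    · rw [if_pos hq]
      have : ∀ p2 : Fin n, star (Hconst F k n (p1,p2) (q1,q2)) * g (p1,p2)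
          = if q2 = p2 then - g (p1,p2) else 0 := by
        intro p2
        simp only [Hconst, Matrix.of_apply]
        by_cases h2 : p2 = q2
        · rw [if_pos ⟨h2, hq⟩, if_pos h2.symm]
          simp
        · rw [if_neg (by tauto), star_zero, zero_mul, if_neg (fun h => h2 h.symm)]
      rw [Finset.sum_congr rfl (fun p2 _ => this p2)]
      simp
    · rw [if_neg hq, Finset.sum_eq_zero]
      intro p2 _
      simp only [Hconst, Matrix.of_apply]
      rw [if_neg (by tauto), star_zero, zero_mul]
  rw [Finset.sum_congr rfl (fun p1 _ => step p1), sum_ite_coe]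

/-- evaluation of the adjoint convolution pencil times a vector -/
lemma conv_adj_mulVec {k n j : ℕ} (y : Fin (j+2) × (Fin (k-1) × Fin n) → F)
    (c1 : Fin (j+1)) (q1 : Fin k) (q2 : Fin n) :
    (convPencil (Hlam F k n) (Hconst F k n) j)ᴴ.mulVec y (c1, (q1, q2))
    = (if h : 1 ≤ (q1:ℕ) then
        y (⟨(c1:ℕ), by have := c1.isLt; omega⟩, (⟨(q1:ℕ)-1, by have := q1.isLt; omega⟩, q2))
      else 0)
      - (if h : (q1:ℕ) < k-1 then
        y (⟨(c1:ℕ)+1, by have := c1.isLt; omega⟩, (⟨(q1:ℕ), h⟩, q2)) else 0) := by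
  rw [Matrix.mulVec, dotProduct, Fintype.sum_prod_type]
  have step : ∀ r1 : Fin (j+2),
      (∑ p : Fin (k-1) × Fin n,
        (convPencil (Hlam F k n) (Hconst F k n) j)ᴴ (c1,(q1,q2)) (r1,p) * y (r1,p))
      = (if (r1:ℕ) = (c1:ℕ) then
          (if h : 1 ≤ (q1:ℕ) then y (r1, (⟨(q1:ℕ)-1, by have := q1.isLt; omega⟩, q2)) else 0)
        else 0)
        + (if (r1:ℕ) = (c1:ℕ)+1 then
          (if h : (q1:ℕ) < k-1 then - y (r1, (⟨(q1:ℕ), h⟩, q2)) else 0) else 0) := by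
    intro r1
    by_cases h1 : (r1:ℕ) = (c1:ℕ)
    · rw [if_pos h1, if_neg (by omega), add_zero, ← hlam_dot' q1 q2 (fun p => y (r1, p))]
      apply Finset.sum_congr rfl
      intro p _
      congr 1
      simp only [Matrix.conjTranspose_apply, convPencil, Matrix.of_apply, if_pos h1]
    · rw [if_neg h1]
      by_cases h2 : (r1:ℕ) = (c1:ℕ)+1
      · rw [if_pos h2, zero_add, ← hconst_dot' q1 q2 (fun p => y (r1, p))]
        apply Finset.sum_congr rfl
        intro p _
        congr 1
        simp only [Matrix.conjTranspose_apply, convPencil, Matrix.of_apply, if_neg h1, if_pos h2]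
      · rw [if_neg h2, add_zero, Finset.sum_eq_zero]
        intro p _
        simp only [Matrix.conjTranspose_apply, convPencil, Matrix.of_apply, if_neg h1, if_neg h2,
          star_zero, zero_mul]
  rw [Finset.sum_congr rfl (fun r1 _ => step r1), Finset.sum_add_distrib]
  have eA : (∑ r1 : Fin (j+2), if (c1:ℕ) = (r1:ℕ) then
      (if h : 1 ≤ (q1:ℕ) then y (r1, (⟨(q1:ℕ)-1, by have := q1.isLt; omega⟩, q2)) else 0) else 0)
      = (if h : 1 ≤ (q1:ℕ) then
        y (⟨(c1:ℕ), by have := c1.isLt; omega⟩, (⟨(q1:ℕ)-1, by have := q1.isLt; omega⟩, q2))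
      else 0) := by
    rw [sum_ite_coe, dif_pos (by have := c1.isLt; omega : (c1:ℕ) < j+2)]
  have eB : (∑ r1 : Fin (j+2), if (c1:ℕ)+1 = (r1:ℕ) then
      (if h : (q1:ℕ) < k-1 then - y (r1, (⟨(q1:ℕ), h⟩, q2)) else 0) else 0)
      = (if h : (q1:ℕ) < k-1 then
        - y (⟨(c1:ℕ)+1, by have := c1.isLt; omega⟩, (⟨(q1:ℕ), h⟩, q2)) else 0) := by
    rw [sum_ite_coe, dif_pos (by have := c1.isLt; omega : (c1:ℕ)+1 < j+2)]
  rw [show (∑ r1 : Fin (j+2), if (r1:ℕ) = (c1:ℕ) then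
      (if h : 1 ≤ (q1:ℕ) then y (r1, (⟨(q1:ℕ)-1, by have := q1.isLt; omega⟩, q2)) else 0) else 0)
      = (∑ r1 : Fin (j+2), if (c1:ℕ) = (r1:ℕ) then
      (if h : 1 ≤ (q1:ℕ) then y (r1, (⟨(q1:ℕ)-1, by have := q1.isLt; omega⟩, q2)) else 0) else 0)
    from Finset.sum_congr rfl (fun r1 _ => by
      by_cases h : (r1:ℕ) = (c1:ℕ)
      · rw [if_pos h, if_pos h.symm]
      · rw [if_neg h, if_neg (fun hh => h hh.symm)])]
  rw [eA]
  rw [show (∑ r1 : Fin (j+2), if (r1:ℕ) = (c1:ℕ)+1 then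
      (if h : (q1:ℕ) < k-1 then - y (r1, (⟨(q1:ℕ), h⟩, q2)) else 0) else 0)
      = (∑ r1 : Fin (j+2), if (c1:ℕ)+1 = (r1:ℕ) then
      (if h : (q1:ℕ) < k-1 then - y (r1, (⟨(q1:ℕ), h⟩, q2)) else 0) else 0)
    from Finset.sum_congr rfl (fun r1 _ => by
      by_cases h : (r1:ℕ) = (c1:ℕ)+1
      · rw [if_pos h, if_pos h.symm]
      · rw [if_neg h, if_neg (fun hh => h hh.symm)])]
  rw [eB]
  by_cases hq : (q1:ℕ) < k-1
  · rw [dif_pos hq, dif_pos hq]; ring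
  · rw [dif_neg hq, dif_neg hq]; ring

lemma eunorm_sq {n : ℕ} (v : EuclideanSpace F (Fin n)) : ‖v‖^2 = ∑ j : Fin n, ‖v j‖^2 := by
  rw [EuclideanSpace.norm_eq, Real.sq_sqrt (by positivity)]

def uu (k n : ℕ) (x : Fin (k-2+1) × (Fin k × Fin n) → F) (c q : ℕ) :
    EuclideanSpace F (Fin n) :=
  WithLp.toLp 2 (fun j => if h : c < k-2+1 ∧ q < k then x (⟨c, h.1⟩, (⟨q, h.2⟩, j)) else 0)

lemma sq_colsum {k n : ℕ} (x : Fin (k-2+1) × (Fin k × Fin n) → F) :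
    vecNormSq x = ∑ c ∈ Finset.range (k-2+1), ∑ q ∈ Finset.range k, ‖uu k n x c q‖^2 := by
  rw [vecNormSq, Fintype.sum_prod_type]
  have inner : ∀ (c1 : Fin (k-2+1)) (q1 : Fin k),
      (∑ q2 : Fin n, ‖x (c1,(q1,q2))‖^2) = ‖uu k n x (c1:ℕ) (q1:ℕ)‖^2 := by
    intro c1 q1
    rw [eunorm_sq]
    apply Finset.sum_congr rfl
    intro q2 _
    congr 1
    rw [uu, PiLp.toLp_apply, dif_pos ⟨c1.isLt, q1.isLt⟩]
  calc ∑ c1 : Fin (k-2+1), ∑ q : Fin k × Fin n, ‖x (c1,q)‖^2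
      = ∑ c1 : Fin (k-2+1), ∑ q1 : Fin k, ‖uu k n x (c1:ℕ) (q1:ℕ)‖^2 := by
        apply Finset.sum_congr rfl
        intro c1 _
        rw [Fintype.sum_prod_type]
        exact Finset.sum_congr rfl fun q1 _ => inner c1 q1
    _ = ∑ c ∈ Finset.range (k-2+1), ∑ q ∈ Finset.range k, ‖uu k n x c q‖^2 := by
        rw [← Fin.sum_univ_eq_sum_range (fun c => ∑ q ∈ Finset.range k, ‖uu k n x c q‖^2)]
        exact Finset.sum_congr rfl fun c1 _ =>
          Fin.sum_univ_eq_sum_range (fun q => ‖uu k n x (c1:ℕ) q‖^2) k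
/-- row expansion for the square case -/
lemma sq_rowsum {k n : ℕ} (hk : 2 ≤ k) (x : Fin (k-2+1) × (Fin k × Fin n) → F) :
    vecNormSq ((convPencil (Hlam F k n) (Hconst F k n) (k-2)).mulVec x)
    = ∑ r ∈ Finset.range (k-2+2), ∑ p ∈ Finset.range (k-1),
        ‖uu k n x r (p+1) - (if r = 0 then 0 else uu k n x (r-1) p)‖^2 := by
  rw [vecNormSq, Fintype.sum_prod_type]
  have inner : ∀ (r1 : Fin (k-2+2)) (p1 : Fin (k-1)),
      (∑ p2 : Fin n, ‖(convPencil (Hlam F k n) (Hconst F k n) (k-2)).mulVec x (r1,(p1,p2))‖^2)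
      = ‖uu k n x (r1:ℕ) ((p1:ℕ)+1) - (if (r1:ℕ) = 0 then 0 else uu k n x ((r1:ℕ)-1) (p1:ℕ))‖^2 := by
    intro r1 p1
    rw [eunorm_sq]
    apply Finset.sum_congr rfl
    intro p2 _
    congr 1
    rw [conv_mulVec x r1 p1 p2]
    have coord : (uu k n x (r1:ℕ) ((p1:ℕ)+1)
        - (if (r1:ℕ) = 0 then 0 else uu k n x ((r1:ℕ)-1) (p1:ℕ))) p2
        = uu k n x (r1:ℕ) ((p1:ℕ)+1) p2
          - (if (r1:ℕ) = 0 then 0 else uu k n x ((r1:ℕ)-1) (p1:ℕ) p2) := by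
      by_cases h : (r1:ℕ) = 0 <;> simp [h]
    rw [coord]
    have e1 : uu k n x (r1:ℕ) ((p1:ℕ)+1) p2
        = (if h : (r1:ℕ) < k-2+1 then
            x (⟨(r1:ℕ), h⟩, (⟨(p1:ℕ)+1, by have := p1.isLt; omega⟩, p2)) else 0) := by
      rw [uu, PiLp.toLp_apply]
      by_cases h : (r1:ℕ) < k-2+1
      · rw [dif_pos (⟨h, (by have := p1.isLt; omega : (p1:ℕ)+1 < k)⟩ :
          (r1:ℕ) < k-2+1 ∧ (p1:ℕ)+1 < k), dif_pos h]
      · rw [dif_neg (fun hc => h hc.1), dif_neg h]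
    have e2 : (if (r1:ℕ) = 0 then (0:F) else uu k n x ((r1:ℕ)-1) (p1:ℕ) p2)
        = (if h : 1 ≤ (r1:ℕ) then
            x (⟨(r1:ℕ)-1, by have := r1.isLt; omega⟩,
              (⟨(p1:ℕ), by have := p1.isLt; omega⟩, p2)) else 0) := by
      by_cases h : (r1:ℕ) = 0
      · rw [if_pos h, dif_neg (by omega)]
      · rw [if_neg h, dif_pos (by omega), uu, PiLp.toLp_apply,
          dif_pos (⟨by have := r1.isLt; omega, by have := p1.isLt; omega⟩ :
            (r1:ℕ)-1 < k-2+1 ∧ (p1:ℕ) < k)]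
    rw [e1, e2]
  calc ∑ r1 : Fin (k-2+2), ∑ pp : Fin (k-1) × Fin n,
        ‖(convPencil (Hlam F k n) (Hconst F k n) (k-2)).mulVec x (r1,pp)‖^2
      = ∑ r1 : Fin (k-2+2), ∑ p1 : Fin (k-1),
        ‖uu k n x (r1:ℕ) ((p1:ℕ)+1) - (if (r1:ℕ) = 0 then 0 else uu k n x ((r1:ℕ)-1) (p1:ℕ))‖^2 := by
        apply Finset.sum_congr rfl
        intro r1 _
        rw [Fintype.sum_prod_type]
        exact Finset.sum_congr rfl fun p1 _ => inner r1 p1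
    _ = _ := by
        rw [← Fin.sum_univ_eq_sum_range (fun r => ∑ p ∈ Finset.range (k-1),
          ‖uu k n x r (p+1) - (if r = 0 then 0 else uu k n x (r-1) p)‖^2)]
        exact Finset.sum_congr rfl fun r1 _ =>
          Fin.sum_univ_eq_sum_range
            (fun p => ‖uu k n x (r1:ℕ) (p+1) - (if (r1:ℕ) = 0 then 0 else uu k n x ((r1:ℕ)-1) p)‖^2)
            (k-1)
lemma square_lb {k n : ℕ} (hk : 2 ≤ k) (x : Fin (k-2+1) × (Fin k × Fin n) → F) :
    (2 - 2*Real.cos (2 * th k)) * vecNormSq x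
    ≤ vecNormSq ((convPencil (Hlam F k n) (Hconst F k n) (k-2)).mulVec x) := by
  rw [sq_colsum x, sq_rowsum hk x,
    sum_diag (k-2+1) k (fun c q => ‖uu k n x c q‖^2),
    sum_diag (k-2+2) (k-1) (fun r p => ‖uu k n x r (p+1) - (if r = 0 then 0 else uu k n x (r-1) p)‖^2)]
  have hR : (k-2+1) + k - 1 = 2*k-2 := by omega
  have hR2 : (k-2+2) + (k-1) - 1 = 2*k-2 := by omega
  rw [hR, hR2, Finset.mul_sum]
  apply Finset.sum_le_sum
  intro s hs
  rw [Finset.mem_range] at hs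
  by_cases hcase : s ≤ k - 2
  · -- short diagonals
    have l1 : dlen (k-2+1) k s = s+1 := by unfold dlen; omega
    have l2 : dlen (k-2+2) (k-1) s = s+1 := by unfold dlen; omega
    rw [l1, l2]
    set y : ℕ → EuclideanSpace F (Fin n) := fun t => uu k n x t (t + (k-1-s)) with hy
    have ecol : ∑ t ∈ range (s+1), ‖uu k n x (t + (s-(k-1))) (t + (k-1-s))‖^2
        = ∑ t ∈ range (s+1), ‖y t‖^2 := by
      apply Finset.sum_congr rfl
      intro t _
      have e : t + (s-(k-1)) = t := by omega
      rw [e]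
    have erow : ∑ t ∈ range (s+1),
        ‖uu k n x (t + (s-(k-1-1))) ((t + ((k-1-1)-s))+1)
          - (if (t + (s-(k-1-1))) = 0 then 0 else uu k n x ((t + (s-(k-1-1)))-1) (t + ((k-1-1)-s)))‖^2
        = ∑ t ∈ range (s+1), ‖y t - (if t = 0 then 0 else y (t-1))‖^2 := by
      apply Finset.sum_congr rfl
      intro t _
      have e1 : t + (s-(k-1-1)) = t := by omega
      have e2 : (t + ((k-1-1)-s))+1 = t + (k-1-s) := by omega
      rw [e1, e2]
      by_cases ht : t = 0
      · rw [if_pos ht, if_pos ht]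
      · rw [if_neg ht, if_neg ht]
        have e3 : t + ((k-1-1)-s) = (t-1) + (k-1-s) := by omega
        rw [e3]
    rw [ecol, erow]
    have peel : ∑ t ∈ range (s+1), ‖y t - (if t = 0 then 0 else y (t-1))‖^2
        = ‖y 0‖^2 + ∑ t ∈ range s, ‖y (t+1) - y t‖^2 := by
      rw [Finset.sum_range_succ' (fun t => ‖y t - (if t = 0 then 0 else y (t-1))‖^2) s]
      have h0 : ‖y 0 - (if 0 = 0 then (0:EuclideanSpace F (Fin n)) else y (0-1))‖^2 = ‖y 0‖^2 := by
        rw [if_pos rfl, sub_zero]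
      have hstep : ∀ t ∈ range s,
          ‖y (t+1) - (if t+1 = 0 then (0:EuclideanSpace F (Fin n)) else y (t+1-1))‖^2
          = ‖y (t+1) - y t‖^2 := by
        intro t _
        rw [if_neg (Nat.succ_ne_zero t), Nat.add_sub_cancel]
      rw [Finset.sum_congr rfl hstep, h0, add_comm]
    rw [peel]
    have := seq_first hk y (L := s+1) (by omega) (by omega)
    simpa using this
  · -- long diagonals
    have l1 : dlen (k-2+1) k s = 2*k-2-s := by unfold dlen; omega
    have l2 : dlen (k-2+2) (k-1) s = 2*k-2-s := by unfold dlen; omega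
    rw [l1, l2]
    set L := 2*k-2-s with hL
    have hL1 : 1 ≤ L := by omega
    have hLk : L ≤ k-1 := by omega
    set y : ℕ → EuclideanSpace F (Fin n) := fun t => uu k n x (t + (s-(k-1))) t with hy
    have ecol : ∑ t ∈ range L, ‖uu k n x (t + (s-(k-1))) (t + (k-1-s))‖^2
        = ∑ t ∈ range L, ‖y t‖^2 := by
      apply Finset.sum_congr rfl
      intro t _
      have e : t + (k-1-s) = t := by omega
      rw [e]
    have erow : ∑ t ∈ range L,
        ‖uu k n x (t + (s-(k-1-1))) ((t + ((k-1-1)-s))+1)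
          - (if (t + (s-(k-1-1))) = 0 then 0 else uu k n x ((t + (s-(k-1-1)))-1) (t + ((k-1-1)-s)))‖^2
        = ∑ t ∈ range L, ‖y (t+1) - y t‖^2 := by
      apply Finset.sum_congr rfl
      intro t _
      rw [if_neg (by omega)]
      have e1 : t + (s-(k-1-1)) = (t+1) + (s-(k-1)) := by omega
      have e2 : (t + ((k-1-1)-s))+1 = t+1 := by omega
      have e3 : (t + (s-(k-1-1)))-1 = t + (s-(k-1)) := by omega
      have e4 : t + ((k-1-1)-s) = t := by omega
      rw [e3, e1, e2, e4]
    rw [ecol, erow]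
    obtain ⟨m, hm⟩ : ∃ m, L = m+1 := ⟨L-1, by omega⟩
    have ylast : y L = 0 := by
      ext j
      show uu k n x (L + (s-(k-1))) L j = _
      simp only [uu, PiLp.toLp_apply]
      rw [dif_neg (by omega)]
      rfl
    rw [hm, Finset.sum_range_succ (fun t => ‖y (t+1) - y t‖^2) m]
    have : ‖y (m+1) - y m‖^2 = ‖y m‖^2 := by
      rw [← hm, ylast, zero_sub, norm_neg]
    rw [this]
    have h := seq_last hk y (L := L) hL1 hLk
    rw [hm] at h
    simpa using h
/-- the minimising vector for the square case -/
def xe (F : Type*) [RCLike F] (k n : ℕ) : Fin (k-2+1) × (Fin k × Fin n) → F :=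
  fun i => if (i.2.1:ℕ) = (i.1:ℕ) ∧ (i.2.2:ℕ) = 0 then ((zv k (i.1:ℕ) : ℝ) : F) else 0

lemma norm_ofReal_sq (a : ℝ) : ‖((a:ℝ) : F)‖^2 = a^2 := by
  rw [RCLike.norm_ofReal, sq_abs]

/-- norm of a scaled coordinate vector -/
lemma norm_coord {n : ℕ} (hn : 0 < n) (a : ℝ) (P : Prop) [Decidable P]
    (v : EuclideanSpace F (Fin n)) (hv : ∀ j, v j = if P ∧ (j:ℕ) = 0 then ((a:ℝ):F) else 0) :
    ‖v‖^2 = if P then a^2 else 0 := by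
  rw [eunorm_sq]
  rw [Finset.sum_congr rfl (fun j _ => by rw [hv j])]
  by_cases hP : P
  · rw [if_pos hP]
    rw [Finset.sum_eq_single (⟨0, hn⟩ : Fin n)]
    · have h0 : (((⟨0, hn⟩ : Fin n)):ℕ) = 0 := rfl
      rw [if_pos (⟨hP, h0⟩ : P ∧ (((⟨0, hn⟩ : Fin n)):ℕ) = 0)]
      exact norm_ofReal_sq a
    · intro j _ hj
      rw [if_neg (fun hc => hj (by ext; simpa using hc.2)), norm_zero]
      norm_num
    · simp
  · rw [if_neg hP]
    apply Finset.sum_eq_zero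
    intro j _
    rw [if_neg (fun hc => hP hc.1), norm_zero]
    norm_num

lemma uu_xe {k n : ℕ} (c q : ℕ) (j : Fin n) :
    uu k n (xe F k n) c q j
    = if (c < k-2+1 ∧ q < k ∧ q = c) ∧ (j:ℕ) = 0 then ((zv k c : ℝ):F) else 0 := by
  rw [uu, PiLp.toLp_apply]
  by_cases h : c < k-2+1 ∧ q < k
  · rw [dif_pos h]
    show (if _ ∧ _ then _ else _) = _
    by_cases h2 : q = c ∧ (j:ℕ) = 0
    · rw [if_pos ⟨by simpa using h2.1, h2.2⟩, if_pos ⟨⟨h.1, h.2, h2.1⟩, h2.2⟩]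
    · rw [if_neg (by simpa using fun a b => h2 ⟨a, b⟩), if_neg (fun hc => h2 ⟨hc.1.2.2, hc.2⟩)]
  · rw [dif_neg h, if_neg (fun hc => h ⟨hc.1.1, hc.1.2.1⟩)]

lemma xe_colnorm {k n : ℕ} (hk : 2 ≤ k) (hn : 0 < n) :
    vecNormSq (xe F k n) = ∑ t ∈ range (k-1), (zv k t)^2 := by
  rw [sq_colsum (xe F k n)]
  have hterm : ∀ c q : ℕ, ‖uu k n (xe F k n) c q‖^2
      = if c < k-2+1 ∧ q < k ∧ q = c then (zv k c)^2 else 0 := by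
    intro c q
    exact norm_coord hn (zv k c) (c < k-2+1 ∧ q < k ∧ q = c) (uu k n (xe F k n) c q)
      (fun j => uu_xe c q j)
  calc ∑ c ∈ range (k-2+1), ∑ q ∈ range k, ‖uu k n (xe F k n) c q‖^2
      = ∑ c ∈ range (k-2+1), (zv k c)^2 := by
        apply Finset.sum_congr rfl
        intro c hc
        rw [Finset.mem_range] at hc
        rw [Finset.sum_congr rfl (fun q _ => hterm c q)]
        have : ∀ q ∈ range k, (if c < k-2+1 ∧ q < k ∧ q = c then (zv k c)^2 else 0)
            = if q = c then (zv k c)^2 else 0 := by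
          intro q hq
          rw [Finset.mem_range] at hq
          by_cases h : q = c
          · rw [if_pos ⟨hc, hq, h⟩, if_pos h]
          · rw [if_neg (fun hc2 => h hc2.2.2), if_neg h]
        rw [Finset.sum_congr rfl this, Finset.sum_ite_eq' (range k) c (fun _ => (zv k c)^2),
          if_pos (Finset.mem_range.mpr (by omega : c < k))]
    _ = ∑ t ∈ range (k-1), (zv k t)^2 := by
        have : k-2+1 = k-1 := by omega
        rw [this]



def bb (k : ℕ) (r : ℕ) : ℝ := (if r < k-2+1 then zv k r else 0) - zv k (r-1)

lemma xe_rownorm (hk : 2 ≤ k) (hn : 0 < n) :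
    vecNormSq ((convPencil (Hlam F (k:ℕ) n) (Hconst F k n) (k-2)).mulVec (xe F k n))
    = ∑ t ∈ range (k-2), (zv k t - zv k (t+1))^2 + (zv k (k-2))^2 := by
  rw [sq_rowsum hk (xe F k n)]
  have hterm : ∀ r < k-2+2, ∀ p < k-1,
      ‖uu k n (xe F k n) r (p+1) - (if r = 0 then 0 else uu k n (xe F k n) (r-1) p)‖^2
      = if r = p+1 then (bb k r)^2 else 0 := by
    intro r hr p hp
    apply norm_coord hn (bb k r) (r = p+1)
    intro j
    have hcoord : (uu k n (xe F k n) r (p+1)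
        - (if r = 0 then 0 else uu k n (xe F k n) (r-1) p)) j
        = uu k n (xe F k n) r (p+1) j
          - (if r = 0 then 0 else uu k n (xe F k n) (r-1) p j) := by
      by_cases h : r = 0 <;> simp [h]
    rw [hcoord, uu_xe, uu_xe]
    by_cases hj : (j:ℕ) = 0
    · simp only [hj, and_true]
      by_cases hQ : r = p+1
      · have hr0 : ¬(r = 0) := by omega
        have c2 : (r-1 < k-2+1 ∧ p < k ∧ p = r-1) := by omega
        by_cases h2 : r < k-2+1
        · have c1 : (r < k-2+1 ∧ p+1 < k ∧ p+1 = r) := by omega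
          rw [if_pos c1, if_neg hr0, if_pos c2, if_pos hQ, bb, if_pos h2]
          push_cast
          ring
        · have c1 : ¬(r < k-2+1 ∧ p+1 < k ∧ p+1 = r) := by omega
          rw [if_neg c1, if_neg hr0, if_pos c2, if_pos hQ, bb, if_neg h2]
          push_cast
          ring
      · have c1 : ¬(r < k-2+1 ∧ p+1 < k ∧ p+1 = r) := by omega
        rw [if_neg c1, if_neg hQ]
        by_cases h1 : r = 0
        · rw [if_pos h1]
          simp
        · have c2 : ¬(r-1 < k-2+1 ∧ p < k ∧ p = r-1) := by omega
          rw [if_neg h1, if_neg c2]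
          simp
    · simp [hj]
  have hsum : ∑ r ∈ range (k-2+2), ∑ p ∈ range (k-1),
      ‖uu k n (xe F k n) r (p+1) - (if r = 0 then 0 else uu k n (xe F k n) (r-1) p)‖^2
      = ∑ r ∈ range (k-2+2), (if r = 0 then 0 else (bb k r)^2) := by
    apply Finset.sum_congr rfl
    intro r hr
    rw [Finset.mem_range] at hr
    rw [Finset.sum_congr rfl (fun p hp => hterm r hr p (Finset.mem_range.mp hp))]
    by_cases h1 : r = 0
    · rw [if_pos h1, Finset.sum_eq_zero]
      intro p _
      rw [if_neg (by omega)]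
    · rw [if_neg h1]
      have : ∀ p ∈ range (k-1), (if r = p+1 then (bb k r)^2 else 0)
          = if p = r-1 then (bb k r)^2 else 0 := by
        intro p _
        by_cases h : p = r-1
        · rw [if_pos (by omega), if_pos h]
        · rw [if_neg (by omega), if_neg h]
      rw [Finset.sum_congr rfl this, Finset.sum_ite_eq' (range (k-1)) (r-1) (fun _ => (bb k r)^2),
        if_pos (Finset.mem_range.mpr (by omega))]
  rw [hsum, Finset.sum_range_succ' (fun r => if r = 0 then 0 else (bb k r)^2) (k-2+1)]
  rw [if_pos rfl, add_zero]
  have : ∀ t ∈ range (k-2+1), (if t+1 = 0 then 0 else (bb k (t+1))^2) = (bb k (t+1))^2 := by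
    intro t _
    rw [if_neg (Nat.succ_ne_zero t)]
  rw [Finset.sum_congr rfl this]
  have e1 : k-2+1 = (k-2)+1 := rfl
  rw [Finset.sum_range_succ (fun t => (bb k (t+1))^2) (k-2)]
  congr 1
  · apply Finset.sum_congr rfl
    intro t ht
    rw [Finset.mem_range] at ht
    rw [bb, if_pos (by omega), Nat.add_sub_cancel]
    ring
  · rw [bb, if_neg (by omega), Nat.add_sub_cancel, zero_sub, neg_sq]

lemma square_attained (hk : 2 ≤ k) (hn : 0 < n) :
    vecNormSq ((convPencil (Hlam F k n) (Hconst F k n) (k-2)).mulVec (xe F k n))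
    = (2 - 2*Real.cos (2 * th k)) * vecNormSq (xe F k n) := by
  rw [xe_rownorm hk hn, xe_colnorm hk hn, eig_identity hk]

lemma xe_pos (hk : 2 ≤ k) (hn : 0 < n) : 0 < vecNormSq (xe F k n) := by
  rw [xe_colnorm (F := F) hk hn]
  have hk' : (2:ℝ) ≤ (k:ℝ) := by exact_mod_cast hk
  have hlt : (2*((0:ℕ):ℝ)+1) < 2*(k:ℝ)-1 := by push_cast; linarith
  have hc := cos_pos_r hk (a := 2*((0:ℕ):ℝ)+1) (by norm_num) hlt
  have h0 : 0 < (zv k 0)^2 := by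
    rw [zv]
    positivity
  have hmem : 0 ∈ range (k-1) := Finset.mem_range.mpr (by omega)
  calc (0:ℝ) < (zv k 0)^2 := h0
  _ ≤ ∑ t ∈ range (k-1), (zv k t)^2 :=
      Finset.single_le_sum (fun t _ => sq_nonneg (zv k t)) hmem
/-- the analogue of `uu` for row vectors of the wide convolution matrix -/
def vv (k n : ℕ) (y : Fin (k-1+2) × (Fin (k-1) × Fin n) → F) (r p : ℕ) :
    EuclideanSpace F (Fin n) :=
  WithLp.toLp 2 (fun j => if h : r < k-1+2 ∧ p < k-1 then y (⟨r, h.1⟩, (⟨p, h.2⟩, j)) else 0)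

lemma wide_colsum {k n : ℕ} (y : Fin (k-1+2) × (Fin (k-1) × Fin n) → F) :
    vecNormSq y = ∑ r ∈ Finset.range (k-1+2), ∑ p ∈ Finset.range (k-1), ‖vv k n y r p‖^2 := by
  rw [vecNormSq, Fintype.sum_prod_type]
  have inner : ∀ (r1 : Fin (k-1+2)) (p1 : Fin (k-1)),
      (∑ p2 : Fin n, ‖y (r1,(p1,p2))‖^2) = ‖vv k n y (r1:ℕ) (p1:ℕ)‖^2 := by
    intro r1 p1
    rw [eunorm_sq]
    apply Finset.sum_congr rfl
    intro p2 _
    congr 1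
    rw [vv, PiLp.toLp_apply, dif_pos ⟨r1.isLt, p1.isLt⟩]
  calc ∑ r1 : Fin (k-1+2), ∑ p : Fin (k-1) × Fin n, ‖y (r1,p)‖^2
      = ∑ r1 : Fin (k-1+2), ∑ p1 : Fin (k-1), ‖vv k n y (r1:ℕ) (p1:ℕ)‖^2 := by
        apply Finset.sum_congr rfl
        intro r1 _
        rw [Fintype.sum_prod_type]
        exact Finset.sum_congr rfl fun p1 _ => inner r1 p1
    _ = _ := by
        rw [← Fin.sum_univ_eq_sum_range (fun r => ∑ p ∈ Finset.range (k-1), ‖vv k n y r p‖^2)]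
        exact Finset.sum_congr rfl fun r1 _ =>
          Fin.sum_univ_eq_sum_range (fun p => ‖vv k n y (r1:ℕ) p‖^2) (k-1)

lemma wide_rowsum {k n : ℕ} (hk : 2 ≤ k) (y : Fin (k-1+2) × (Fin (k-1) × Fin n) → F) :
    vecNormSq ((convPencil (Hlam F k n) (Hconst F k n) (k-1))ᴴ.mulVec y)
    = ∑ c ∈ Finset.range (k-1+1), ∑ q ∈ Finset.range k,
        ‖(if 1 ≤ q then vv k n y c (q-1) else 0) - vv k n y (c+1) q‖^2 := by
  rw [vecNormSq, Fintype.sum_prod_type]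
  have inner : ∀ (c1 : Fin (k-1+1)) (q1 : Fin k),
      (∑ q2 : Fin n, ‖(convPencil (Hlam F k n) (Hconst F k n) (k-1))ᴴ.mulVec y (c1,(q1,q2))‖^2)
      = ‖(if 1 ≤ (q1:ℕ) then vv k n y (c1:ℕ) ((q1:ℕ)-1) else 0) - vv k n y ((c1:ℕ)+1) (q1:ℕ)‖^2 := by
    intro c1 q1
    rw [eunorm_sq]
    apply Finset.sum_congr rfl
    intro q2 _
    congr 1
    rw [conv_adj_mulVec y c1 q1 q2]
    have hcoord : ((if 1 ≤ (q1:ℕ) then vv k n y (c1:ℕ) ((q1:ℕ)-1) else 0)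
        - vv k n y ((c1:ℕ)+1) (q1:ℕ)) q2
        = (if 1 ≤ (q1:ℕ) then vv k n y (c1:ℕ) ((q1:ℕ)-1) q2 else 0)
          - vv k n y ((c1:ℕ)+1) (q1:ℕ) q2 := by
      by_cases h : 1 ≤ (q1:ℕ) <;> simp [h]
    rw [hcoord]
    have e1 : (if 1 ≤ (q1:ℕ) then vv k n y (c1:ℕ) ((q1:ℕ)-1) q2 else 0)
        = (if h : 1 ≤ (q1:ℕ) then
            y (⟨(c1:ℕ), by have := c1.isLt; omega⟩,
              (⟨(q1:ℕ)-1, by have := q1.isLt; omega⟩, q2)) else 0) := by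
      by_cases h : 1 ≤ (q1:ℕ)
      · rw [if_pos h, dif_pos h, vv, PiLp.toLp_apply,
          dif_pos (⟨by have := c1.isLt; omega, by have := q1.isLt; omega⟩ :
            (c1:ℕ) < k-1+2 ∧ (q1:ℕ)-1 < k-1)]
      · rw [if_neg h, dif_neg h]
    have e2 : vv k n y ((c1:ℕ)+1) (q1:ℕ) q2
        = (if h : (q1:ℕ) < k-1 then
            y (⟨(c1:ℕ)+1, by have := c1.isLt; omega⟩, (⟨(q1:ℕ), h⟩, q2)) else 0) := by
      by_cases h : (q1:ℕ) < k-1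
      · rw [vv, PiLp.toLp_apply, dif_pos (⟨by have := c1.isLt; omega, h⟩ : (c1:ℕ)+1 < k-1+2 ∧ (q1:ℕ) < k-1),
          dif_pos h]
      · rw [vv, PiLp.toLp_apply, dif_neg (fun hc => h hc.2), dif_neg h]
    rw [e1, e2]
  calc ∑ c1 : Fin (k-1+1), ∑ q : Fin k × Fin n,
        ‖(convPencil (Hlam F k n) (Hconst F k n) (k-1))ᴴ.mulVec y (c1,q)‖^2
      = ∑ c1 : Fin (k-1+1), ∑ q1 : Fin k,
        ‖(if 1 ≤ (q1:ℕ) then vv k n y (c1:ℕ) ((q1:ℕ)-1) else 0) - vv k n y ((c1:ℕ)+1) (q1:ℕ)‖^2 := by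
        apply Finset.sum_congr rfl
        intro c1 _
        rw [Fintype.sum_prod_type]
        exact Finset.sum_congr rfl fun q1 _ => inner c1 q1
    _ = _ := by
        rw [← Fin.sum_univ_eq_sum_range (fun c => ∑ q ∈ Finset.range k,
          ‖(if 1 ≤ q then vv k n y c (q-1) else 0) - vv k n y (c+1) q‖^2)]
        exact Finset.sum_congr rfl fun c1 _ =>
          Fin.sum_univ_eq_sum_range
            (fun q => ‖(if 1 ≤ q then vv k n y (c1:ℕ) (q-1) else 0) - vv k n y ((c1:ℕ)+1) q‖^2) k

lemma wide_lb {k n : ℕ} (hk : 2 ≤ k) (y : Fin (k-1+2) × (Fin (k-1) × Fin n) → F) :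
    (2 - 2*Real.cos (2 * th k)) * vecNormSq y
    ≤ vecNormSq ((convPencil (Hlam F k n) (Hconst F k n) (k-1))ᴴ.mulVec y) := by
  rw [wide_colsum y, wide_rowsum hk y,
    sum_diag (k-1+2) (k-1) (fun r p => ‖vv k n y r p‖^2),
    sum_diag (k-1+1) k (fun c q => ‖(if 1 ≤ q then vv k n y c (q-1) else 0) - vv k n y (c+1) q‖^2)]
  have hR : (k-1+2) + (k-1) - 1 = 2*k-1 := by omega
  have hR2 : (k-1+1) + k - 1 = 2*k-1 := by omega
  rw [hR, hR2, Finset.mul_sum]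
  apply Finset.sum_le_sum
  intro s hs
  rw [Finset.mem_range] at hs
  by_cases hA : s ≤ k-2
  · -- case A
    have l1 : dlen (k-1+2) (k-1) s = s+1 := by unfold dlen; omega
    have l2 : dlen (k-1+1) k s = s+1 := by unfold dlen; omega
    rw [l1, l2]
    set w : ℕ → EuclideanSpace F (Fin n) := fun t => vv k n y t (t + ((k-1-1)-s)) with hw
    have erow : ∑ t ∈ range (s+1), ‖vv k n y (t + (s-(k-1-1))) (t + ((k-1-1)-s))‖^2
        = ∑ t ∈ range (s+1), ‖w t‖^2 := by
      apply Finset.sum_congr rfl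
      intro t _
      have e : t + (s-(k-1-1)) = t := by omega
      rw [e]
    have ecol : ∑ t ∈ range (s+1),
        ‖(if 1 ≤ (t + ((k-1)-s)) then vv k n y (t + (s-(k-1))) ((t + ((k-1)-s))-1) else 0)
          - vv k n y ((t + (s-(k-1)))+1) (t + ((k-1)-s))‖^2
        = ∑ t ∈ range (s+1), ‖w t - w (t+1)‖^2 := by
      apply Finset.sum_congr rfl
      intro t _
      rw [if_pos (by omega)]
      have e1 : t + (s-(k-1)) = t := by omega
      have e2 : (t + ((k-1)-s))-1 = t + ((k-1-1)-s) := by omega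
      have e3 : t + ((k-1)-s) = (t+1) + ((k-1-1)-s) := by omega
      rw [e2, e1, e3]
    rw [erow, ecol]
    have wlast : w (s+1) = 0 := by
      ext j
      show vv k n y (s+1) ((s+1) + ((k-1-1)-s)) j = _
      simp only [vv, PiLp.toLp_apply]
      rw [dif_neg (by omega)]
      rfl
    rw [Finset.sum_range_succ (fun t => ‖w t - w (t+1)‖^2) s, wlast, sub_zero]
    have hmid : ∑ t ∈ range s, ‖w t - w (t+1)‖^2 = ∑ t ∈ range s, ‖w (t+1) - w t‖^2 :=
      Finset.sum_congr rfl fun t _ => by rw [norm_sub_rev]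
    rw [hmid]
    have h := seq_last hk w (L := s+1) (by omega) (by omega)
    simpa using h
  · by_cases hB : s = k-1
    · -- case B
      subst hB
      have l1 : dlen (k-1+2) (k-1) (k-1) = k-1 := by unfold dlen; omega
      have l2 : dlen (k-1+1) k (k-1) = k := by unfold dlen; omega
      rw [l1, l2]
      set w : ℕ → EuclideanSpace F (Fin n) := fun t => if 1 ≤ t then vv k n y t (t-1) else 0
        with hw
      set z : ℕ → EuclideanSpace F (Fin n) := fun t => vv k n y (t+1) t with hz
      have erow : ∑ t ∈ range (k-1), ‖vv k n y (t + ((k-1)-(k-1-1))) (t + ((k-1-1)-(k-1)))‖^2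
          = ∑ t ∈ range (k-1), ‖z t‖^2 := by
        apply Finset.sum_congr rfl
        intro t _
        have e1 : t + ((k-1)-(k-1-1)) = t+1 := by omega
        have e2 : t + ((k-1-1)-(k-1)) = t := by omega
        rw [e1, e2]
      have ecol : ∑ t ∈ range k,
          ‖(if 1 ≤ (t + ((k-1)-(k-1))) then
              vv k n y (t + ((k-1)-(k-1))) ((t + ((k-1)-(k-1)))-1) else 0)
            - vv k n y ((t + ((k-1)-(k-1)))+1) (t + ((k-1)-(k-1)))‖^2
          = ∑ t ∈ range k, ‖w t - w (t+1)‖^2 := by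
        apply Finset.sum_congr rfl
        intro t _
        have e1 : t + ((k-1)-(k-1)) = t := by omega
        rw [e1]
        have e2 : w (t+1) = vv k n y (t+1) t := by
          rw [hw]
          simp only
          rw [if_pos (by omega), Nat.add_sub_cancel]
        rw [e2, hw]
      rw [erow, ecol]
      -- drop the last column term
      have hdrop : ∑ t ∈ range (k-1), ‖w t - w (t+1)‖^2 ≤ ∑ t ∈ range k, ‖w t - w (t+1)‖^2 := by
        have hss := Finset.sum_range_succ (fun t => ‖w t - w (t+1)‖^2) (k-1)
        have hkk : k-1+1 = k := by omega
        rw [hkk] at hss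
        rw [hss]
        have hnn : (0:ℝ) ≤ ‖w (k-1) - w k‖^2 := by positivity
        linarith
    -- rewrite the k-1 sum in first-Dirichlet form
      have hform : ∑ t ∈ range (k-1), ‖w t - w (t+1)‖^2
          = ‖z 0‖^2 + ∑ t ∈ range (k-1-1), ‖z (t+1) - z t‖^2 := by
        have e0 : ∀ t, w (t+1) = z t := by
          intro t
          rw [hw, hz]
          simp only
          rw [if_pos (by omega), Nat.add_sub_cancel]
        have hss := Finset.sum_range_succ' (fun t => ‖w t - w (t+1)‖^2) (k-1-1)
        have hkk : k-1-1+1 = k-1 := by omega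
        rw [hkk] at hss
        rw [hss]
        have hfirst : ‖w 0 - w (0+1)‖^2 = ‖z 0‖^2 := by
          rw [e0 0, hw]
          simp only
          rw [if_neg (by omega), zero_sub, norm_neg]
        have hmid : ∀ t ∈ range (k-1-1), ‖w (t+1) - w (t+1+1)‖^2 = ‖z (t+1) - z t‖^2 := by
          intro t _
          rw [e0 t, e0 (t+1), norm_sub_rev]
        rw [hfirst, Finset.sum_congr rfl hmid, add_comm]
      have h := seq_first hk z (L := k-1) (by omega) (by omega)
      calc (2 - 2*Real.cos (2 * th k)) * ∑ t ∈ range (k-1), ‖z t‖^2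
          ≤ ‖z 0‖^2 + ∑ t ∈ range (k-1-1), ‖z (t+1) - z t‖^2 := h
        _ = ∑ t ∈ range (k-1), ‖w t - w (t+1)‖^2 := hform.symm
        _ ≤ ∑ t ∈ range k, ‖w t - w (t+1)‖^2 := hdrop
    · -- case C : s ≥ k
      have hC : k ≤ s := by omega
      have l1 : dlen (k-1+2) (k-1) s = 2*k-1-s := by unfold dlen; omega
      have l2 : dlen (k-1+1) k s = 2*k-1-s := by unfold dlen; omega
      rw [l1, l2]
      set L := 2*k-1-s with hL
      have hL1 : 1 ≤ L := by omega
      have hLk : L ≤ k-1 := by omega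
      set w : ℕ → EuclideanSpace F (Fin n) :=
        fun t => if 1 ≤ t then vv k n y (t + (s-(k-1))) (t-1) else 0 with hw
      set z : ℕ → EuclideanSpace F (Fin n) := fun t => vv k n y (t+1 + (s-(k-1))) t with hz
      have e0 : ∀ t, w (t+1) = z t := by
        intro t
        rw [hw, hz]
        simp only
        rw [if_pos (by omega), Nat.add_sub_cancel]
      have erow : ∑ t ∈ range L, ‖vv k n y (t + (s-(k-1-1))) (t + ((k-1-1)-s))‖^2
          = ∑ t ∈ range L, ‖z t‖^2 := by
        apply Finset.sum_congr rfl
        intro t _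
        have e1 : t + (s-(k-1-1)) = t+1 + (s-(k-1)) := by omega
        have e2 : t + ((k-1-1)-s) = t := by omega
        rw [e1, e2]
      have ecol : ∑ t ∈ range L,
          ‖(if 1 ≤ (t + ((k-1)-s)) then vv k n y (t + (s-(k-1))) ((t + ((k-1)-s))-1) else 0)
            - vv k n y ((t + (s-(k-1)))+1) (t + ((k-1)-s))‖^2
          = ∑ t ∈ range L, ‖w t - w (t+1)‖^2 := by
        apply Finset.sum_congr rfl
        intro t _
        have e1 : t + ((k-1)-s) = t := by omega
        rw [e1]
        have e2 : w (t+1) = vv k n y ((t + (s-(k-1)))+1) t := by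
          rw [hw]
          simp only
          rw [if_pos (by omega), Nat.add_sub_cancel,
            show t+1+(s-(k-1)) = (t+(s-(k-1)))+1 from by omega]
        rw [e2, hw]
      rw [erow, ecol]
      have hform : ∑ t ∈ range L, ‖w t - w (t+1)‖^2
          = ‖z 0‖^2 + ∑ t ∈ range (L-1), ‖z (t+1) - z t‖^2 := by
        have hss := Finset.sum_range_succ' (fun t => ‖w t - w (t+1)‖^2) (L-1)
        have hkk : L-1+1 = L := by omega
        rw [hkk] at hss
        rw [hss]
        have hfirst : ‖w 0 - w (0+1)‖^2 = ‖z 0‖^2 := by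
          rw [e0 0, hw]
          simp only
          rw [if_neg (by omega), zero_sub, norm_neg]
        have hmid : ∀ t ∈ range (L-1), ‖w (t+1) - w (t+1+1)‖^2 = ‖z (t+1) - z t‖^2 := by
          intro t _
          rw [e0 t, e0 (t+1), norm_sub_rev]
        rw [hfirst, Finset.sum_congr rfl hmid, add_comm]
      rw [hform]
      exact seq_first hk z hL1 hLk

/-- the minimising vector for the wide case -/
def ye (F : Type*) [RCLike F] (k n : ℕ) : Fin (k-1+2) × (Fin (k-1) × Fin n) → F :=
  fun i => if (i.2.1:ℕ) = (i.1:ℕ) ∧ (i.2.2:ℕ) = 0 then ((zv k (i.1:ℕ) : ℝ) : F) else 0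

lemma vv_ye {k n : ℕ} (r p : ℕ) (j : Fin n) :
    vv k n (ye F k n) r p j
    = if (r < k-1+2 ∧ p < k-1 ∧ p = r) ∧ (j:ℕ) = 0 then ((zv k r : ℝ):F) else 0 := by
  rw [vv, PiLp.toLp_apply]
  by_cases h : r < k-1+2 ∧ p < k-1
  · rw [dif_pos h]
    show (if _ ∧ _ then _ else _) = _
    by_cases h2 : p = r ∧ (j:ℕ) = 0
    · rw [if_pos ⟨by simpa using h2.1, h2.2⟩, if_pos ⟨⟨h.1, h.2, h2.1⟩, h2.2⟩]
    · rw [if_neg (by simpa using fun a b => h2 ⟨a, b⟩), if_neg (fun hc => h2 ⟨hc.1.2.2, hc.2⟩)]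
  · rw [dif_neg h, if_neg (fun hc => h ⟨hc.1.1, hc.1.2.1⟩)]

lemma ye_colnorm {k n : ℕ} (hk : 2 ≤ k) (hn : 0 < n) :
    vecNormSq (ye F k n) = ∑ t ∈ range (k-1), (zv k t)^2 := by
  rw [wide_colsum (ye F k n)]
  have hterm : ∀ r p : ℕ, ‖vv k n (ye F k n) r p‖^2
      = if r < k-1+2 ∧ p < k-1 ∧ p = r then (zv k r)^2 else 0 := by
    intro r p
    exact norm_coord hn (zv k r) (r < k-1+2 ∧ p < k-1 ∧ p = r) (vv k n (ye F k n) r p)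
      (fun j => vv_ye r p j)
  have hinner : ∀ r ∈ range (k-1+2), (∑ p ∈ range (k-1), ‖vv k n (ye F k n) r p‖^2)
      = if r < k-1 then (zv k r)^2 else 0 := by
    intro r hr
    rw [Finset.mem_range] at hr
    rw [Finset.sum_congr rfl (fun p _ => hterm r p)]
    have : ∀ p ∈ range (k-1), (if r < k-1+2 ∧ p < k-1 ∧ p = r then (zv k r)^2 else 0)
        = if p = r ∧ r < k-1 then (zv k r)^2 else 0 := by
      intro p hp
      rw [Finset.mem_range] at hp
      by_cases h : p = r
      · by_cases h2 : r < k-1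
        · rw [if_pos ⟨hr, hp, h⟩, if_pos ⟨h, h2⟩]
        · rw [if_neg (by omega), if_neg (by omega)]
      · rw [if_neg (by omega), if_neg (by omega)]
    rw [Finset.sum_congr rfl this]
    by_cases h2 : r < k-1
    · have : ∀ p ∈ range (k-1), (if p = r ∧ r < k-1 then (zv k r)^2 else 0)
          = if p = r then (zv k r)^2 else 0 := by
        intro p _
        by_cases h : p = r
        · rw [if_pos ⟨h, h2⟩, if_pos h]
        · rw [if_neg (by omega), if_neg h]
      rw [Finset.sum_congr rfl this,
        Finset.sum_ite_eq' (range (k-1)) r (fun _ => (zv k r)^2),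
        if_pos (Finset.mem_range.mpr h2), if_pos h2]
    · rw [if_neg h2, Finset.sum_eq_zero]
      intro p _
      rw [if_neg (by omega)]
  rw [Finset.sum_congr rfl hinner]
  rw [← Finset.sum_subset (Finset.range_subset_range.mpr (by omega : k-1 ≤ k-1+2))
    (fun x _ hx => if_neg (by rw [Finset.mem_range] at hx; omega))]
  apply Finset.sum_congr rfl
  intro t ht
  rw [Finset.mem_range] at ht
  rw [if_pos ht]

def bw (k : ℕ) (c : ℕ) : ℝ := zv k c - (if c+1 < k-1 then zv k (c+1) else 0)

lemma ye_rownorm {k n : ℕ} (hk : 2 ≤ k) (hn : 0 < n) :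
    vecNormSq ((convPencil (Hlam F k n) (Hconst F k n) (k-1))ᴴ.mulVec (ye F k n))
    = ∑ t ∈ range (k-2), (zv k t - zv k (t+1))^2 + (zv k (k-2))^2 := by
  rw [wide_rowsum hk (ye F k n)]
  have hterm : ∀ c < k-1+1, ∀ q < k,
      ‖(if 1 ≤ q then vv k n (ye F k n) c (q-1) else 0) - vv k n (ye F k n) (c+1) q‖^2
      = if q = c+1 then (bw k c)^2 else 0 := by
    intro c hc q hq
    apply norm_coord hn (bw k c) (q = c+1)
    intro j
    have hcoord : ((if 1 ≤ q then vv k n (ye F k n) c (q-1) else 0)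
        - vv k n (ye F k n) (c+1) q) j
        = (if 1 ≤ q then vv k n (ye F k n) c (q-1) j else 0)
          - vv k n (ye F k n) (c+1) q j := by
      by_cases h : 1 ≤ q <;> simp [h]
    rw [hcoord]
    by_cases h1 : 1 ≤ q
    · rw [if_pos h1, vv_ye, vv_ye]
      by_cases hj : (j:ℕ) = 0
      · simp only [hj, and_true]
        by_cases hQ : q = c+1
        · have c1 : c < k-1+2 ∧ q-1 < k-1 ∧ q-1 = c := by omega
          rw [if_pos c1, if_pos hQ, bw]
          by_cases h2 : q < k-1
          · rw [if_pos (by omega : c+1 < k-1+2 ∧ q < k-1 ∧ q = c+1),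
              if_pos (by omega : c+1 < k-1), RCLike.ofReal_sub]
          · rw [if_neg (by omega : ¬(c+1 < k-1+2 ∧ q < k-1 ∧ q = c+1)),
              if_neg (by omega : ¬(c+1 < k-1)), sub_zero, sub_zero]
        · rw [if_neg (by omega : ¬(c < k-1+2 ∧ q-1 < k-1 ∧ q-1 = c)),
            if_neg (by omega : ¬(c+1 < k-1+2 ∧ q < k-1 ∧ q = c+1)), if_neg hQ, sub_zero]
      · rw [if_neg (fun hc2 => hj hc2.2), if_neg (fun hc2 => hj hc2.2),
          if_neg (fun hc2 => hj hc2.2), sub_zero]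
    · rw [if_neg h1, vv_ye, zero_sub,
        if_neg (fun hc2 => absurd hc2.1.2.2 (by omega)),
        if_neg (fun hc2 => absurd hc2.1 (by omega : ¬(q = c+1))), neg_zero]
  have hinner : ∀ c ∈ range (k-1+1),
      (∑ q ∈ range k, ‖(if 1 ≤ q then vv k n (ye F k n) c (q-1) else 0)
        - vv k n (ye F k n) (c+1) q‖^2)
      = if c < k-1 then (bw k c)^2 else 0 := by
    intro c hc
    rw [Finset.mem_range] at hc
    rw [Finset.sum_congr rfl (fun q hq => hterm c hc q (Finset.mem_range.mp hq))]
    rw [Finset.sum_ite_eq' (range k) (c+1) (fun _ => (bw k c)^2)]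
    by_cases h2 : c < k-1
    · rw [if_pos (Finset.mem_range.mpr (by omega)), if_pos h2]
    · rw [if_neg (by rw [Finset.mem_range]; omega), if_neg h2]
  rw [Finset.sum_congr rfl hinner]
  rw [← Finset.sum_subset (Finset.range_subset_range.mpr (by omega : k-1 ≤ k-1+1))
    (fun x _ hx => if_neg (by rw [Finset.mem_range] at hx; omega))]
  have : ∀ c ∈ range (k-1), (if c < k-1 then (bw k c)^2 else 0) = (bw k c)^2 := by
    intro c hc
    rw [Finset.mem_range] at hc
    rw [if_pos hc]
  rw [Finset.sum_congr rfl this]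
  have hss := Finset.sum_range_succ (fun c => (bw k c)^2) (k-2)
  have hkk : k-2+1 = k-1 := by omega
  rw [hkk] at hss
  rw [hss]
  congr 1
  · apply Finset.sum_congr rfl
    intro c hc
    rw [Finset.mem_range] at hc
    rw [bw, if_pos (by omega)]
  · rw [bw, if_neg (by omega), sub_zero]

lemma wide_attained {k n : ℕ} (hk : 2 ≤ k) (hn : 0 < n) :
    vecNormSq ((convPencil (Hlam F k n) (Hconst F k n) (k-1))ᴴ.mulVec (ye F k n))
    = (2 - 2*Real.cos (2 * th k)) * vecNormSq (ye F k n) := by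
  rw [ye_rownorm hk hn, ye_colnorm hk hn, eig_identity hk]

lemma ye_pos {k n : ℕ} (hk : 2 ≤ k) (hn : 0 < n) : 0 < vecNormSq (ye F k n) := by
  rw [ye_colnorm (F := F) hk hn]
  have hk' : (2:ℝ) ≤ (k:ℝ) := by exact_mod_cast hk
  have hlt : (2*((0:ℕ):ℝ)+1) < 2*(k:ℝ)-1 := by push_cast; linarith
  have hc := cos_pos_r hk (a := 2*((0:ℕ):ℝ)+1) (by norm_num) hlt
  have h0 : 0 < (zv k 0)^2 := by
    rw [zv]
    positivity
  have hmem : 0 ∈ range (k-1) := Finset.mem_range.mpr (by omega)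
  calc (0:ℝ) < (zv k 0)^2 := h0
  _ ≤ ∑ t ∈ range (k-1), (zv k t)^2 :=
      Finset.single_le_sum (fun t _ => sq_nonneg (zv k t)) hmem

lemma vecNormSq_nonneg {ι : Type*} [Fintype ι] (x : ι → F) : 0 ≤ vecNormSq x := by
  rw [vecNormSq]; positivity

lemma vecNormSq_smul {ι : Type*} [Fintype ι] (c : ℝ) (x : ι → F) :
    vecNormSq (((c:ℝ):F) • x) = c^2 * vecNormSq x := by
  rw [vecNormSq, vecNormSq, Finset.mul_sum]
  apply Finset.sum_congr rfl
  intro i _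
  rw [Pi.smul_apply, smul_eq_mul, norm_mul, RCLike.norm_ofReal, mul_pow, sq_abs]

lemma sinf_eq {ι κ : Type*} [Fintype ι] [Fintype κ] (M : Matrix ι κ F) (a : ℝ) (ha : 0 ≤ a)
    (hlb : ∀ x : κ → F, a^2 * vecNormSq x ≤ vecNormSq (M.mulVec x))
    (x0 : κ → F) (h0 : 0 < vecNormSq x0)
    (heq : vecNormSq (M.mulVec x0) = a^2 * vecNormSq x0) :
    sInf {r : ℝ | ∃ x : κ → F, vecNormSq x = 1 ∧ r = Real.sqrt (vecNormSq (M.mulVec x))}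
    = a := by
  set S := {r : ℝ | ∃ x : κ → F, vecNormSq x = 1 ∧ r = Real.sqrt (vecNormSq (M.mulVec x))}
    with hS
  have hmem : a ∈ S := by
    refine ⟨(((Real.sqrt (vecNormSq x0))⁻¹ : ℝ) : F) • x0, ?_, ?_⟩
    · rw [vecNormSq_smul]
      rw [inv_pow, Real.sq_sqrt (vecNormSq_nonneg x0)]
      exact inv_mul_cancel₀ (ne_of_gt h0)
    · rw [Matrix.mulVec_smul]
      have : (((Real.sqrt (vecNormSq x0))⁻¹ : ℝ) : F) • M.mulVec x0
          = (((Real.sqrt (vecNormSq x0))⁻¹ : ℝ) : F) • (M.mulVec x0) := rfl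
      rw [this, vecNormSq_smul, heq]
      rw [inv_pow, Real.sq_sqrt (vecNormSq_nonneg x0)]
      rw [show (vecNormSq x0)⁻¹ * (a^2 * vecNormSq x0) = a^2 * ((vecNormSq x0)⁻¹ * vecNormSq x0)
        from by ring, inv_mul_cancel₀ (ne_of_gt h0), mul_one, Real.sqrt_sq ha]
  have hlbS : ∀ r ∈ S, a ≤ r := by
    rintro r ⟨x, hx1, rfl⟩
    have h1 : a^2 ≤ vecNormSq (M.mulVec x) := by
      have := hlb x
      rwa [hx1, mul_one] at this
    calc a = Real.sqrt (a^2) := (Real.sqrt_sq ha).symm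
    _ ≤ Real.sqrt (vecNormSq (M.mulVec x)) := Real.sqrt_le_sqrt h1
  exact le_antisymm (csInf_le ⟨a, hlbS⟩ hmem) (le_csInf ⟨a, hmem⟩ hlbS)

lemma mu_eq (k : ℕ) : 2 - 2*Real.cos (2 * th k) = (2 * Real.sin (th k))^2 := by
  rw [Real.cos_two_mul']
  have p := Real.sin_sq_add_cos_sq (th k)
  linear_combination (-2 : ℝ) * p

lemma two_sin_nonneg {k : ℕ} (hk : 2 ≤ k) : 0 ≤ 2 * Real.sin (th k) := by
  have h1 : 0 < th k := by
    rw [th]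
    apply div_pos Real.pi_pos
    have : (2:ℝ) ≤ (k:ℝ) := by exact_mod_cast hk
    nlinarith
  have h2 : th k < Real.pi := by
    rw [th]
    rw [div_lt_iff₀ (by
      have : (2:ℝ) ≤ (k:ℝ) := by exact_mod_cast hk
      nlinarith)]
    have : (2:ℝ) ≤ (k:ℝ) := by exact_mod_cast hk
    nlinarith [Real.pi_pos]
  have := Real.sin_pos_of_pos_of_lt_pi h1 h2
  linarith

/-- the final numeric bound -/
lemma final_bound {k : ℕ} (hk : 2 ≤ k) :
    3 / (2 * (k:ℝ)) ≤ 2 * Real.sin (Real.pi / (4 * (k:ℝ) - 2)) := by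
  by_cases hk2 : k = 2
  · subst hk2
    have : (4 * ((2:ℕ):ℝ) - 2) = 6 := by norm_num
    rw [this, show Real.pi / 6 = Real.pi / 6 from rfl]
    rw [Real.sin_pi_div_six]
    norm_num
  · have hk3 : 3 ≤ k := by omega
    have hK : (3:ℝ) ≤ (k:ℝ) := by exact_mod_cast hk3
    set K := (k:ℝ) with hKdef
    have hden : (0:ℝ) < 4*K - 2 := by nlinarith
    set x := Real.pi / (4*K - 2) with hx
    have hx0 : 0 < x := div_pos Real.pi_pos hden
    have hxpi : x * (4*K - 2) = Real.pi := div_mul_cancel₀ _ (ne_of_gt hden)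
    have hx10 : x ≤ Real.pi / 10 := by
      rw [hx]
      apply div_le_div_of_nonneg_left Real.pi_pos.le (by norm_num) (by nlinarith)
    have hpiu : Real.pi < 3.1416 := by
      have := Real.pi_lt_d6
      linarith
    have hxb : x ≤ 0.31416 := by
      calc x ≤ Real.pi / 10 := hx10
      _ ≤ 0.31416 := by linarith
    have hx1 : x ≤ 1 := by linarith
    have hs := Real.sin_gt_sub_cube hx0
    have hpil : 3.1415 < Real.pi := by
      have := Real.pi_gt_d6
      linarith
    have key : 3 / (2*K) ≤ 2*(x - x^3/4) := by
      rw [div_le_iff₀ (by nlinarith : (0:ℝ) < 2*K)]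
      have h4Kx : 4*K*x = Real.pi + 2*x := by nlinarith [hxpi]
      nlinarith [hx0, hxb, hpil, hpiu, h4Kx, sq_nonneg x, mul_pos hx0 hx0]
    calc 3 / (2*K) ≤ 2*(x - x^3/4) := key
    _ ≤ 2 * Real.sin x := by nlinarith [hs, pow_pos hx0 3]

end Aux

open Aux

/-- For `k ≥ 2`, `n ≥ 1` and `τ(λ) = H_{k−1}(λ) ⊗ I_n`, the smallest
singular values of the convolution matrices `C_{k−2}(τ)` and `C_{k−1}(τ)` are both equal
to `2 sin(π/(4k−2))`, which is at least `3/(2k)`. -/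
theorem statement_17 {F : Type*} [RCLike F] {k n : ℕ} (hk : 2 ≤ k) (hn : 0 < n) :
    sigmaMin (convPencil (Hlam F k n) (Hconst F k n) (k - 2)) =
        2 * Real.sin (Real.pi / (4 * (k : ℝ) - 2)) ∧
    sigmaMin (convPencil (Hlam F k n) (Hconst F k n) (k - 1)) =
        2 * Real.sin (Real.pi / (4 * (k : ℝ) - 2)) ∧
    3 / (2 * (k : ℝ)) ≤ 2 * Real.sin (Real.pi / (4 * (k : ℝ) - 2)) := by
  refine ⟨?_, ?_, final_bound hk⟩
  · have hcard : Fintype.card (Fin (k-2+1) × (Fin k × Fin n))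
        ≤ Fintype.card (Fin (k-2+2) × (Fin (k-1) × Fin n)) := by
      simp only [Fintype.card_prod, Fintype.card_fin]
      obtain ⟨m, rfl⟩ : ∃ m, k = m+2 := ⟨k-2, by omega⟩
      apply le_of_eq
      have e1 : m+2-2+1 = m+1 := by omega
      have e2 : m+2-2+2 = m+2 := by omega
      have e3 : m+2-1 = m+1 := by omega
      rw [e1, e2, e3]
      ring
    rw [sigmaMin, if_pos hcard]
    have h := sinf_eq (convPencil (Hlam F k n) (Hconst F k n) (k-2))
      (2 * Real.sin (th k)) (two_sin_nonneg hk)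
      (fun x => by rw [← mu_eq]; exact square_lb hk x)
      (xe F k n) (xe_pos hk hn)
      (by rw [square_attained hk hn, mu_eq])
    exact h
  · have hcard : ¬ (Fintype.card (Fin (k-1+1) × (Fin k × Fin n))
        ≤ Fintype.card (Fin (k-1+2) × (Fin (k-1) × Fin n))) := by
      simp only [Fintype.card_prod, Fintype.card_fin, not_le]
      obtain ⟨m, rfl⟩ : ∃ m, k = m+2 := ⟨k-2, by omega⟩
      have e1 : m+2-1+1 = m+2 := by omega
      have e2 : m+2-1+2 = m+3 := by omega
      have e3 : m+2-1 = m+1 := by omega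
      rw [e1, e2, e3]
      have h1 : (m+3)*(m+1) < (m+2)*(m+2) := by nlinarith
      calc (m+3)*((m+1)*n) = ((m+3)*(m+1))*n := by ring
      _ < ((m+2)*(m+2))*n := (Nat.mul_lt_mul_right hn).mpr h1
      _ = (m+2)*((m+2)*n) := by ring
    rw [sigmaMin, if_neg hcard]
    have h := sinf_eq ((convPencil (Hlam F k n) (Hconst F k n) (k-1))ᴴ)
      (2 * Real.sin (th k)) (two_sin_nonneg hk)
      (fun y => by rw [← mu_eq]; exact wide_lb hk y)
      (ye F k n) (ye_pos hk hn)
      (by rw [wide_attained hk hn, mu_eq])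
    exact h

end GLin
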